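/- (Root correctness) Under the setup of the dynamic programming algorithm, let r = root(𝒯) with X_r = ∅, suppose Invariant 12 holds for r, and let Ū = (∅,…,∅). Let OPT = min{ Σ_{k=1}^{l} α_k |U_k| : U₁,…,U_l ⊆ A and (𝔄, U₁,…,U_l) ⊨ φ } (with min ∅ := ∞). Then OPT = min{ val_r(ℛ) : ℛ ∈ S_r(Ū) and eval(convert(ℛ)) = ⊤ }. -/

import Mathlib

namespace MSOG

attribute [local instance] Classical.propDecidable

/-! ### Players and vocabularies -/

inductive Player where
  | falsifier
  | verifier
deriving DecidableEq

/-- A vocabulary: a finite set of relation symbol names and nullary symbol names.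
Symbols are drawn from `ℕ`; the arity of relation symbols is given by a global
arity function `ar : ℕ → ℕ`. -/
structure Vocab where
  rels : Finset ℕ
  nulls : Finset ℕ

def Vocab.addRel (τ : Vocab) (R : ℕ) : Vocab := ⟨insert R τ.rels, τ.nulls⟩

def Vocab.addNul (τ : Vocab) (c : ℕ) : Vocab := ⟨τ.rels, insert c τ.nulls⟩

/-! ### Structures -/

/-- A (partially interpreted) structure: a finite universe of objects (⊆ ℕ),
an interpretation of each relation symbol as a set of tuples (lists), and a
partial interpretation of nullary symbols (`none` = nil/uninterpreted). -/
structure Struc where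
  voc : Vocab
  univ : Finset ℕ
  rel : ℕ → List ℕ → Prop
  nul : ℕ → Option ℕ

/-- Wellformedness of a structure w.r.t. the arity function: relations only
interpret relation symbols of the vocabulary by tuples of the right length over
the universe, and nullary symbols of the vocabulary by universe elements. -/
structure Struc.WF (ar : ℕ → ℕ) (A : Struc) : Prop where
  rel_wf : ∀ R t, A.rel R t → R ∈ A.voc.rels ∧ t.length = ar R ∧ ∀ x ∈ t, x ∈ A.univ
  nul_wf : ∀ c x, A.nul c = some x → c ∈ A.voc.nulls ∧ x ∈ A.univ

def Struc.FullyInterpreted (A : Struc) : Prop := ∀ c ∈ A.voc.nulls, (A.nul c).isSome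

/-- The set `c̄^𝔄` of values of the interpreted nullary symbols. -/
def Struc.nulValues (A : Struc) : Finset ℕ :=
  A.voc.nulls.biUnion fun c => (A.nul c).toFinset

/-- Induced substructure `𝔄[s]`. -/
def Struc.restrict (A : Struc) (s : Finset ℕ) : Struc where
  voc := A.voc
  univ := A.univ ∩ s
  rel := fun R t => A.rel R t ∧ ∀ x ∈ t, x ∈ s
  nul := fun c =>
    match A.nul c with
    | some x => if x ∈ s then some x else none
    | none => none

/-- Expansion `(𝔄, u)` interpreting the nullary symbol `c` as `u` (possibly nil). -/
def Struc.addNul (A : Struc) (c : ℕ) (u : Option ℕ) : Struc where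
  voc := A.voc.addNul c
  univ := A.univ
  rel := A.rel
  nul := fun d => if d = c then u else A.nul d

/-- Expansion `(𝔄, U)` interpreting the unary relation symbol `R` as `U ⊆ A`. -/
def Struc.addRel (A : Struc) (R : ℕ) (U : Finset ℕ) : Struc where
  voc := A.voc.addRel R
  univ := A.univ
  rel := fun S t => if S = R then ∃ x ∈ U, t = [x] else A.rel S t
  nul := A.nul

/-- Expansion `(𝔄, U₁, …, U_l)` interpreting each unary relation symbol `R ∈ Rs`
as `U R ⊆ A`. -/
def Struc.addRels (A : Struc) (Rs : Finset ℕ) (U : ℕ → Finset ℕ) : Struc where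
  voc := ⟨A.voc.rels ∪ Rs, A.voc.nulls⟩
  univ := A.univ
  rel := fun S t => if S ∈ Rs then ∃ x ∈ U S, t = [x] else A.rel S t
  nul := A.nul

/-- `h` is an isomorphism from `A` to `B`. -/
structure Iso (A B : Struc) (h : ℕ → ℕ) : Prop where
  voc_eq : A.voc = B.voc
  bij : Set.BijOn h ↑A.univ ↑B.univ
  interp_iff : ∀ c ∈ A.voc.nulls, ((A.nul c).isSome ↔ (B.nul c).isSome)
  nul_map : ∀ c ∈ A.voc.nulls, ∀ x, A.nul c = some x → B.nul c = some (h x)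
  rel_map : ∀ R ∈ A.voc.rels, ∀ t : List ℕ, (∀ x ∈ t, x ∈ A.univ) →
    (A.rel R t ↔ B.rel R (t.map h))

/-- Two structures are compatible: interpreted nullary symbols agree, and the
identity is an isomorphism between the substructures induced by the common part
of the universes. -/
def Compatible (A B : Struc) : Prop :=
  A.voc = B.voc ∧
  (∀ c x y, A.nul c = some x → B.nul c = some y → x = y) ∧
  Iso (A.restrict (A.univ ∩ B.univ)) (B.restrict (A.univ ∩ B.univ)) id

/-- Union of two (compatible) structures. -/
def Struc.union (A B : Struc) : Struc where
  voc := A.voc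
  univ := A.univ ∪ B.univ
  rel := fun R t => A.rel R t ∨ B.rel R t
  nul := fun c =>
    match A.nul c with
    | some x => some x
    | none => B.nul c

/-! ### MSO formulas -/

/-- MSO formulas in negation normal form. -/
inductive MSO where
  | atom (R : ℕ) (cs : List ℕ)
  | natom (R : ℕ) (cs : List ℕ)
  | conj (φ ψ : MSO)
  | disj (φ ψ : MSO)
  | fall (c : ℕ) (φ : MSO)
  | fex (c : ℕ) (φ : MSO)
  | sall (R : ℕ) (φ : MSO)
  | sex (R : ℕ) (φ : MSO)
deriving DecidableEq

/-- `MSO.wf ar τ φ` means `φ ∈ MSO(τ)` (w.r.t. the arity function `ar`,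
quantified symbols being fresh unary relation resp. nullary symbols). -/
def MSO.wf (ar : ℕ → ℕ) : Vocab → MSO → Prop
  | τ, .atom R cs => R ∈ τ.rels ∧ cs.length = ar R ∧ ∀ c ∈ cs, c ∈ τ.nulls
  | τ, .natom R cs => R ∈ τ.rels ∧ cs.length = ar R ∧ ∀ c ∈ cs, c ∈ τ.nulls
  | τ, .conj φ ψ => MSO.wf ar τ φ ∧ MSO.wf ar τ ψ
  | τ, .disj φ ψ => MSO.wf ar τ φ ∧ MSO.wf ar τ ψ
  | τ, .fall c φ => c ∉ τ.nulls ∧ MSO.wf ar (τ.addNul c) φ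
  | τ, .fex c φ => c ∉ τ.nulls ∧ MSO.wf ar (τ.addNul c) φ
  | τ, .sall R φ => R ∉ τ.rels ∧ ar R = 1 ∧ MSO.wf ar (τ.addRel R) φ
  | τ, .sex R φ => R ∉ τ.rels ∧ ar R = 1 ∧ MSO.wf ar (τ.addRel R) φ

/-- Quantifier rank. -/
def MSO.qr : MSO → ℕ
  | .atom _ _ => 0
  | .natom _ _ => 0
  | .conj φ ψ => max φ.qr ψ.qr
  | .disj φ ψ => max φ.qr ψ.qr
  | .fall _ φ => φ.qr + 1
  | .fex _ φ => φ.qr + 1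
  | .sall _ φ => φ.qr + 1
  | .sex _ φ => φ.qr + 1

/-- Length `‖φ‖` of (an encoding of) the formula. -/
def MSO.len : MSO → ℕ
  | .atom _ cs => 1 + cs.length
  | .natom _ cs => 1 + cs.length
  | .conj φ ψ => 1 + φ.len + ψ.len
  | .disj φ ψ => 1 + φ.len + ψ.len
  | .fall _ φ => 1 + φ.len
  | .fex _ φ => 1 + φ.len
  | .sall _ φ => 1 + φ.len
  | .sex _ φ => 1 + φ.len

def MSO.IsAtomic : MSO → Prop
  | .atom _ _ | .natom _ _ => True
  | _ => False

def MSO.IsUniversal : MSO → Prop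
  | .conj _ _ | .fall _ _ | .sall _ _ => True
  | _ => False

def MSO.IsExistential : MSO → Prop
  | .disj _ _ | .fex _ _ | .sex _ _ => True
  | _ => False

/-- Classical (Tarskian) satisfaction `𝔄 ⊨ φ`. -/
def Sat : Struc → MSO → Prop
  | A, .atom R cs => ∃ t, cs.mapM A.nul = some t ∧ A.rel R t
  | A, .natom R cs => ∃ t, cs.mapM A.nul = some t ∧ ¬ A.rel R t
  | A, .conj φ ψ => Sat A φ ∧ Sat A ψ
  | A, .disj φ ψ => Sat A φ ∨ Sat A ψ
  | A, .fall c φ => ∀ a ∈ A.univ, Sat (A.addNul c (some a)) φ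
  | A, .fex c φ => ∃ a ∈ A.univ, Sat (A.addNul c (some a)) φ
  | A, .sall R φ => ∀ U ⊆ A.univ, Sat (A.addRel R U) φ
  | A, .sex R φ => ∃ U ⊆ A.univ, Sat (A.addRel R U) φ

/-! ### Games -/

/-- A game, presented as its unfolding: either one of the two fixed games
`⊤` (the verifier has a winning strategy) or `⊥` (the falsifier has a winning
strategy), or an initial position together with the player (if any) this
position is assigned to and the list of subgames reachable by the moves. -/
inductive Game (P : Type) where
  | top
  | bot
  | node (pos : P) (owner : Option Player) (subs : List (Game P))

theorem Game.sizeOf_lt_node {P : Type} [SizeOf P] {p : P} {o : Option Player}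
    {s : List (Game P)} {g : Game P} (h : g ∈ s) :
    sizeOf g < sizeOf (Game.node p o s) := by
  have := List.sizeOf_lt_of_mem h
  simp only [Game.node.sizeOf_spec]
  omega

/-- The evaluation algorithm: returns `⊤` if the verifier has a winning
strategy, `⊥` if the falsifier has one, and otherwise the unfolded game
recording the drawn plays. -/
noncomputable def Game.eval {P : Type} : Game P → Game P
  | .top => .top
  | .bot => .bot
  | .node p o subs =>
    let es := subs.attach.map fun g => Game.eval g.1
    match o with
    | some .falsifier =>
      if ∀ g ∈ es, g = Game.top then Game.top
      else if Game.bot ∈ es then Game.bot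
      else Game.node p o es
    | some .verifier =>
      if ∀ g ∈ es, g = Game.bot then Game.bot
      else if Game.top ∈ es then Game.top
      else Game.node p o es
    | none => Game.node p o es
termination_by g => sizeOf g
decreasing_by
  exact Game.sizeOf_lt_node g.2

/-- Equivalence of games, relative to an equivalence `pe` on positions:
the initial positions are equivalent (with equal assignment to players) and
there is a bijection `e` between the sets of subgames such that each subgame is
equivalent to its image. -/
def GEquiv {P : Type} (pe : P → P → Prop) : Game P → Game P → Prop
  | .top, .top => True
  | .bot, .bot => True
  | .node p o s, .node q o' t =>
    pe p q ∧ o = o' ∧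
    ∃ e : {g // g ∈ s} ≃ {g // g ∈ t}, ∀ g : {g // g ∈ s}, GEquiv pe g.1 (e g).1
  | _, _ => False
termination_by g _ => sizeOf g
decreasing_by
  exact Game.sizeOf_lt_node g.2

/-- Number of positions of a game. -/
def Game.size {P : Type} : Game P → ℕ
  | .top => 1
  | .bot => 1
  | .node _ _ subs => 1 + (subs.attach.map fun g => Game.size g.1).sum
termination_by g => sizeOf g
decreasing_by
  exact Game.sizeOf_lt_node g.2

/-! ### Model checking games -/

/-- Positions of extended model checking games: a structure, the current set
`X`, and a formula. -/
abbrev EPos : Type := Struc × Finset ℕ × MSO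

/-- Positions of classical model checking games. -/
abbrev CPos : Type := Struc × MSO

/-- Equivalence of positions: same `X ⊆ H₁ ∩ H₂`, same formula, and an
isomorphism between the structures fixing `X` pointwise. -/
def PosEquivE (p q : EPos) : Prop :=
  p.2.1 = q.2.1 ∧ p.2.2 = q.2.2 ∧
  p.2.1 ⊆ p.1.univ ∧ p.2.1 ⊆ q.1.univ ∧
  ∃ h : ℕ → ℕ, Iso p.1 q.1 h ∧ ∀ a ∈ p.2.1, h a = a

/-- Equivalence `≅` of extended model checking games. -/
def GEquivE : Game EPos → Game EPos → Prop := GEquiv PosEquivE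

/-- The extended model checking game `EMC(𝔄, X, φ)` (argument order:
formula, structure, set). -/
noncomputable def EMC : MSO → Struc → Finset ℕ → Game EPos
  | .atom R cs, A, X =>
    Game.node (A.restrict (X ∪ A.nulValues), X, .atom R cs)
      (if ∀ c ∈ cs, (A.nul c).isSome then
        (if Sat A (.atom R cs) then some .falsifier else some .verifier)
       else none) []
  | .natom R cs, A, X =>
    Game.node (A.restrict (X ∪ A.nulValues), X, .natom R cs)
      (if ∀ c ∈ cs, (A.nul c).isSome then
        (if Sat A (.natom R cs) then some .falsifier else some .verifier)
       else none) []
  | .conj φ ψ, A, X =>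
    Game.node (A.restrict (X ∪ A.nulValues), X, .conj φ ψ) (some .falsifier)
      [EMC φ A X, EMC ψ A X]
  | .disj φ ψ, A, X =>
    Game.node (A.restrict (X ∪ A.nulValues), X, .disj φ ψ) (some .verifier)
      [EMC φ A X, EMC ψ A X]
  | .fall c φ, A, X =>
    Game.node (A.restrict (X ∪ A.nulValues), X, .fall c φ) (some .falsifier)
      ((none :: A.univ.toList.map some).map fun u => EMC φ (A.addNul c u) X)
  | .fex c φ, A, X =>
    Game.node (A.restrict (X ∪ A.nulValues), X, .fex c φ) (some .verifier)
      ((none :: A.univ.toList.map some).map fun u => EMC φ (A.addNul c u) X)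
  | .sall R φ, A, X =>
    Game.node (A.restrict (X ∪ A.nulValues), X, .sall R φ) (some .falsifier)
      (A.univ.powerset.toList.map fun U => EMC φ (A.addRel R U) X)
  | .sex R φ, A, X =>
    Game.node (A.restrict (X ∪ A.nulValues), X, .sex R φ) (some .verifier)
      (A.univ.powerset.toList.map fun U => EMC φ (A.addRel R U) X)

/-- The classical model checking game `MC(𝔄, φ)` (argument order:
formula, structure); object quantifiers move only to elements of the universe
(no nil moves). -/
noncomputable def MC : MSO → Struc → Game CPos
  | .atom R cs, A =>
    Game.node (A.restrict A.nulValues, .atom R cs)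
      (if Sat A (.atom R cs) then some .falsifier else some .verifier) []
  | .natom R cs, A =>
    Game.node (A.restrict A.nulValues, .natom R cs)
      (if Sat A (.natom R cs) then some .falsifier else some .verifier) []
  | .conj φ ψ, A =>
    Game.node (A.restrict A.nulValues, .conj φ ψ) (some .falsifier)
      [MC φ A, MC ψ A]
  | .disj φ ψ, A =>
    Game.node (A.restrict A.nulValues, .disj φ ψ) (some .verifier)
      [MC φ A, MC ψ A]
  | .fall c φ, A =>
    Game.node (A.restrict A.nulValues, .fall c φ) (some .falsifier)
      (A.univ.toList.map fun a => MC φ (A.addNul c (some a)))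
  | .fex c φ, A =>
    Game.node (A.restrict A.nulValues, .fex c φ) (some .verifier)
      (A.univ.toList.map fun a => MC φ (A.addNul c (some a)))
  | .sall R φ, A =>
    Game.node (A.restrict A.nulValues, .sall R φ) (some .falsifier)
      (A.univ.powerset.toList.map fun U => MC φ (A.addRel R U))
  | .sex R φ, A =>
    Game.node (A.restrict A.nulValues, .sex R φ) (some .verifier)
      (A.univ.powerset.toList.map fun U => MC φ (A.addRel R U))

/-! ### The algorithms reduce, convert, forget, combine -/

/-- Remove subgames that are equivalent (`≅`) to an already kept one. -/
noncomputable def dedupEquiv : List (Game EPos) → List (Game EPos)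
  | [] => []
  | g :: gs =>
    let r := dedupEquiv gs
    if ∃ g' ∈ r, GEquivE g g' then r else g :: r

/-- The algorithm `reduce`. -/
noncomputable def reduce : Game EPos → Game EPos
  | .top => .top
  | .bot => .bot
  | .node p o subs =>
    if p.2.2.IsAtomic then Game.eval (Game.node p o subs)
    else
      let rs := subs.attach.map fun g => reduce g.1
      if p.2.2.IsUniversal ∧ Game.bot ∈ rs then Game.bot
      else if p.2.2.IsExistential ∧ Game.top ∈ rs then Game.top
      else
        let kept := dedupEquiv (rs.filter fun g => decide (g ≠ Game.top ∧ g ≠ Game.bot))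
        if kept = [] then Game.eval (Game.node p o ([] : List (Game EPos)))
        else Game.node p o kept
termination_by g => sizeOf g
decreasing_by
  exact Game.sizeOf_lt_node g.2

/-- Whether a game is a node whose position's structure is fully interpreted. -/
def Game.IsFullNodeE : Game EPos → Prop
  | .node q _ _ => q.1.FullyInterpreted
  | _ => False

/-- The algorithm `convert`, turning an extended model checking game into a
classical model checking game by keeping exactly the subgames whose position's
structure is fully interpreted. -/
noncomputable def convert : Game EPos → Game CPos
  | .top => .top
  | .bot => .bot
  | .node p o subs =>
    Game.node (p.1.restrict p.1.nulValues, p.2.2) o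
      (subs.attach.filterMap fun g =>
        if g.1.IsFullNodeE then some (convert g.1) else none)
termination_by g => sizeOf g
decreasing_by
  exact Game.sizeOf_lt_node g.2

/-- The algorithm `forget(𝒢, x)`. -/
noncomputable def forget : Game EPos → ℕ → Game EPos
  | .top, _ => .top
  | .bot, _ => .bot
  | .node p o subs, x =>
    let H := p.1
    let p' : EPos :=
      if ∃ c ∈ H.voc.nulls, H.nul c = some x then (H, p.2.1.erase x, p.2.2)
      else (H.restrict (H.univ.erase x), p.2.1.erase x, p.2.2)
    reduce (Game.node p' o (subs.attach.map fun g => forget g.1 x))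
termination_by g _ => sizeOf g
decreasing_by
  exact Game.sizeOf_lt_node g.2

/-- A pair of subgames that `combine` recurses on: both are nodes with the same
principal subformula and compatible structures. -/
def PairOk : Game EPos → Game EPos → Prop
  | .node p _ _, .node q _ _ => p.2.2 = q.2.2 ∧ Compatible p.1 q.1
  | _, _ => False

/-- The algorithm `combine(𝒢₁, 𝒢₂)`. -/
noncomputable def combine : Game EPos → Game EPos → Game EPos
  | .node p1 o1 s1, .node p2 _ s2 =>
    reduce (Game.node (p1.1.union p2.1, p1.2.1 ∪ p2.2.1, p1.2.2) o1
      ((s1.attach.flatMap fun g1 => s2.attach.map fun g2 => (g1, g2)).filterMap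
        fun gg => if PairOk gg.1.1 gg.2.1 then some (combine gg.1.1 gg.2.1) else none))
  | g, _ => g
termination_by g1 g2 => sizeOf g1 + sizeOf g2
decreasing_by
  have h1 := List.sizeOf_lt_of_mem gg.1.2
  have h2 := List.sizeOf_lt_of_mem gg.2.2
  simp only [Game.node.sizeOf_spec]
  omega

/-! ### Iterated exponentials and minima -/

/-- `iterexp t x = exp^t(x)`, the `t`-fold iterated exponential. -/
def iterexp : ℕ → ℕ → ℕ
  | 0, x => x
  | t + 1, x => 2 ^ iterexp t x

/-- `r` is the minimum of the set `V ⊆ ℤ`, in `WithTop ℤ` (with `min ∅ = ⊤`). -/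
def IsMinZ (r : WithTop ℤ) (V : Set ℤ) : Prop :=
  (∀ v ∈ V, r ≤ (v : WithTop ℤ)) ∧ (V = ∅ → r = ⊤) ∧
  (V.Nonempty → ∃ v ∈ V, r = (v : WithTop ℤ))

/-- `r` is the minimum of the set `V ⊆ WithTop ℤ` (with `min ∅ = ⊤`). -/
def IsMinW (r : WithTop ℤ) (V : Set (WithTop ℤ)) : Prop :=
  (∀ v ∈ V, r ≤ v) ∧ (V = ∅ → r = ⊤) ∧ (V.Nonempty → r ∈ V)

/-! ### Tree decompositions -/

/-- Rooted trees with bags at the nodes. -/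
inductive RTree where
  | node (bag : Finset ℕ) (children : List RTree)

theorem RTree.sizeOf_lt_node {b : Finset ℕ} {cs : List RTree} {c : RTree}
    (h : c ∈ cs) : sizeOf c < sizeOf (RTree.node b cs) := by
  have := List.sizeOf_lt_of_mem h
  simp only [RTree.node.sizeOf_spec]
  omega

def RTree.bag : RTree → Finset ℕ
  | .node b _ => b

/-- The subtree at an address (a node of the tree is identified with the list
of child indices leading to it from the root). -/
def RTree.subtreeAt : RTree → List ℕ → Option RTree
  | t, [] => some t
  | .node _ cs, i :: is =>
    match cs[i]? with
    | some c => c.subtreeAt is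
    | none => none

/-- The bag at an address. -/
def RTree.bagAt (t : RTree) (p : List ℕ) : Option (Finset ℕ) :=
  (t.subtreeAt p).map RTree.bag

/-- All objects occurring in bags of the tree (`Aᵢ` for the subtree at `i`). -/
def RTree.allObjs : RTree → Finset ℕ
  | .node b cs => b ∪ (cs.attach.map fun c => RTree.allObjs c.1).foldr (· ∪ ·) ∅
termination_by t => sizeOf t
decreasing_by
  exact RTree.sizeOf_lt_node c.2

/-- The number of nodes `|T|` of the tree. -/
def RTree.count : RTree → ℕ
  | .node _ cs => 1 + (cs.attach.map fun c => RTree.count c.1).sum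
termination_by t => sizeOf t
decreasing_by
  exact RTree.sizeOf_lt_node c.2

/-- Longest common prefix of two addresses. -/
def lcp : List ℕ → List ℕ → List ℕ
  | a :: as, b :: bs => if a = b then a :: lcp as bs else []
  | _, _ => []

/-- `(𝒯, 𝒳)` (coded as a single bag-labelled rooted tree) is a tree
decomposition of the relational structure `A`: bags are subsets of the universe
covering it, every tuple of every relation is contained in some bag, and if `r`
lies on the path between `p` and `q` then `X_p ∩ X_q ⊆ X_r`. -/
structure IsTreeDecomp (A : Struc) (t : RTree) : Prop where
  bags_sub : ∀ p b, t.bagAt p = some b → b ⊆ A.univ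
  covers : ∀ a ∈ A.univ, ∃ p b, t.bagAt p = some b ∧ a ∈ b
  rel_covers : ∀ R tup, A.rel R tup → ∃ p b, t.bagAt p = some b ∧ ∀ x ∈ tup, x ∈ b
  connected : ∀ p q r bp bq br, t.bagAt p = some bp → t.bagAt q = some bq →
    t.bagAt r = some br → lcp p q <+: r → (r <+: p ∨ r <+: q) → bp ∩ bq ⊆ br

/-- The width of the tree decomposition is at most `w`: every bag has at most
`w + 1` elements. -/
def TDWidthLE (t : RTree) (w : ℕ) : Prop :=
  ∀ p b, t.bagAt p = some b → b.card ≤ w + 1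

/-- A node of a nice tree decomposition is a leaf (singleton bag), an introduce
node, a forget node, or a join node. -/
def RTree.NiceStep : RTree → Prop
  | .node b [] => ∃ x, b = {x}
  | .node b [c] =>
      (∃ x, x ∉ c.allObjs ∧ b = insert x c.bag) ∨ (∃ x ∈ c.bag, b = c.bag.erase x)
  | .node b [c₁, c₂] => b = c₁.bag ∧ b = c₂.bag
  | .node _ _ => False

/-- A nice tree decomposition: every node is a leaf, introduce, forget, or join
node. -/
def RTree.Nice (t : RTree) : Prop := ∀ p s, t.subtreeAt p = some s → s.NiceStep

/-! ### The dynamic programming algorithm -/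

/-- `ValidAssign Rbar X U`: `U` is an assignment `(U₁, …, U_l)` of subsets of
`X` to the free unary relation symbols in `Rbar` (normalized to `∅` outside
`Rbar`). -/
def ValidAssign (Rbar X : Finset ℕ) (U : ℕ → Finset ℕ) : Prop :=
  (∀ R ∈ Rbar, U R ⊆ X) ∧ ∀ R ∉ Rbar, U R = ∅

/-- `W` matches `U` on the bag `Xi` (componentwise). -/
def Matches (Rbar Xi : Finset ℕ) (W U : ℕ → Finset ℕ) : Prop :=
  ∀ R ∈ Rbar, W R ∩ Xi = U R

/-- The reduced extended model checking game of the `τ`-expansion of `B`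
by the assignment `W`. -/
noncomputable def RED (φ : MSO) (Rbar : Finset ℕ) (B : Struc) (Xi : Finset ℕ)
    (W : ℕ → Finset ℕ) : Game EPos :=
  reduce (EMC φ (B.addRels Rbar W) Xi)

/-- The value `valᵢ(ℛ)` should be the minimum of `Σ αₖ |R_k^{𝔄ᵢ'} ∖ Xᵢ|` over
the matching expansions equivalent to `ℛ`; this is the summand for one `W`. -/
def cost (α : ℕ → ℤ) (Rbar : Finset ℕ) (X : Finset ℕ) (W : ℕ → Finset ℕ) : ℤ :=
  ∑ R ∈ Rbar, α R * (((W R) \ X).card : ℤ)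

/-- Invariant 12 at a node with substructure `Ai` and bag `Xi`, for the
table `S` and values `val`. -/
def Invariant (φ : MSO) (α : ℕ → ℤ) (Rbar : Finset ℕ) (Ai : Struc) (Xi : Finset ℕ)
    (S : (ℕ → Finset ℕ) → Set (Game EPos)) (val : Game EPos → WithTop ℤ) : Prop :=
  ∀ U, ValidAssign Rbar Xi U →
    ((∀ W, ValidAssign Rbar Ai.univ W → Matches Rbar Xi W U →
        RED φ Rbar Ai Xi W ≠ Game.bot →
        ∃! G, G ∈ S U ∧ GEquivE G (RED φ Rbar Ai Xi W)) ∧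
     (∀ G ∈ S U, G ≠ Game.bot ∧
        ∃ W, ValidAssign Rbar Ai.univ W ∧ Matches Rbar Xi W U ∧
          GEquivE (RED φ Rbar Ai Xi W) G) ∧
     (∀ G ∈ S U, IsMinZ (val G)
        {v : ℤ | ∃ W, ValidAssign Rbar Ai.univ W ∧ Matches Rbar Xi W U ∧
           GEquivE (RED φ Rbar Ai Xi W) G ∧ RED φ Rbar Ai Xi W ≠ Game.bot ∧
           v = cost α Rbar Xi W}))

end MSOG

namespace MSOG

attribute [local instance] Classical.propDecidable
section Dev
open Game

lemma Game.eval_node {P : Type} (p : P) (o : Option Player) (subs : List (Game P)) :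
    Game.eval (Game.node p o subs) =
      (match o with
      | some .falsifier =>
        if ∀ g ∈ subs.map Game.eval, g = Game.top then Game.top
        else if Game.bot ∈ subs.map Game.eval then Game.bot
        else Game.node p o (subs.map Game.eval)
      | some .verifier =>
        if ∀ g ∈ subs.map Game.eval, g = Game.bot then Game.bot
        else if Game.top ∈ subs.map Game.eval then Game.top
        else Game.node p o (subs.map Game.eval)
      | none => Game.node p o (subs.map Game.eval)) := by
  rw [Game.eval.eq_def]; simp

lemma dedupEquiv_subset : ∀ {l : List (Game EPos)} {k}, k ∈ dedupEquiv l → k ∈ l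
  | [], k, h => by simp [dedupEquiv] at h
  | g :: gs, k, h => by
    rw [dedupEquiv] at h
    split at h
    · exact List.mem_cons_of_mem _ (dedupEquiv_subset h)
    · rcases List.mem_cons.1 h with h | h
      · exact h ▸ List.mem_cons_self
      · exact List.mem_cons_of_mem _ (dedupEquiv_subset h)

lemma dedupEquiv_eq_nil_iff : ∀ {l : List (Game EPos)}, dedupEquiv l = [] ↔ l = []
  | [] => by simp [dedupEquiv]
  | g :: gs => by
    rw [dedupEquiv]
    split
    · rename_i hex
      simp only [List.cons_ne_nil, iff_false]
      intro h
      rw [h] at hex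
      simp at hex
    · simp

example : GEquiv (fun _ _ => True) (Game.top : Game ℕ) Game.bot ↔ False := by
  simp [GEquiv]

end Dev
section Dev2

def PosNice (p : EPos) : Prop :=
  p.2.1 ⊆ p.1.univ ∧ ∀ c ∈ p.1.voc.nulls, ∀ x, p.1.nul c = some x → x ∈ p.1.univ

def NiceG : Game EPos → Prop
  | .top => True
  | .bot => True
  | .node p _ subs => PosNice p ∧ ∀ g : {x // x ∈ subs}, NiceG g.1
termination_by g => sizeOf g
decreasing_by exact Game.sizeOf_lt_node g.2

lemma niceG_node {p : EPos} {o subs} :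
    NiceG (Game.node p o subs) ↔ PosNice p ∧ ∀ g ∈ subs, NiceG g := by
  rw [NiceG]; simp [Subtype.forall]

lemma gequiv_node_iff {P : Type} {pe : P → P → Prop} {p q : P} {o o' : Option Player}
    {s t : List (Game P)} :
    GEquiv pe (.node p o s) (.node q o' t) ↔
      pe p q ∧ o = o' ∧
      ∃ e : {g // g ∈ s} ≃ {g // g ∈ t}, ∀ g : {g // g ∈ s}, GEquiv pe g.1 (e g).1 := by
  rw [GEquiv]

lemma iso_id (A : Struc) : Iso A A id := by
  refine ⟨rfl, Set.bijOn_id _, fun c _ => Iff.rfl, fun c _ x h => h, fun R _ t _ => by simp⟩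

lemma posEquivE_refl {p : EPos} (h : p.2.1 ⊆ p.1.univ) : PosEquivE p p :=
  ⟨rfl, rfl, h, h, id, iso_id _, fun _ _ => rfl⟩

theorem gequivE_refl : ∀ (g : Game EPos), NiceG g → GEquivE g g
  | .top, _ => by simp [GEquivE, GEquiv]
  | .bot, _ => by simp [GEquivE, GEquiv]
  | .node p o subs, hn => by
    rw [niceG_node] at hn
    rw [GEquivE, gequiv_node_iff]
    exact ⟨posEquivE_refl hn.1.1, rfl,
      Equiv.refl _, fun g => gequivE_refl g.1 (hn.2 g.1 g.2)⟩
termination_by g => sizeOf g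
decreasing_by exact Game.sizeOf_lt_node g.2

end Dev2
section Dev3

lemma eval_falsifier_top {P : Type} {p : P} {subs} :
    Game.eval (Game.node p (some .falsifier) subs) = Game.top ↔
      ∀ g ∈ subs, Game.eval g = Game.top := by
  rw [Game.eval_node]
  by_cases h1 : ∀ g ∈ subs.map Game.eval, g = Game.top
  · rw [if_pos h1]
    exact ⟨fun _ g hg => h1 _ (List.mem_map_of_mem hg), fun _ => rfl⟩
  · rw [if_neg h1]
    have h2 : ¬ ∀ g ∈ subs, Game.eval g = Game.top := by
      intro h; exact h1 (by simpa using h)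
    simp only [h2, iff_false]
    split <;> simp

lemma eval_falsifier_bot {P : Type} {p : P} {subs} :
    Game.eval (Game.node p (some .falsifier) subs) = Game.bot ↔
      ∃ g ∈ subs, Game.eval g = Game.bot := by
  rw [Game.eval_node]
  by_cases h1 : ∀ g ∈ subs.map Game.eval, g = Game.top
  · rw [if_pos h1]
    constructor
    · intro h; exact absurd h (by simp)
    · rintro ⟨g, hg, hb⟩
      have := h1 _ (List.mem_map_of_mem hg)
      rw [hb] at this; exact absurd this (by simp)
  · rw [if_neg h1]
    by_cases h2 : Game.bot ∈ subs.map Game.eval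
    · rw [if_pos h2]
      refine ⟨fun _ => ?_, fun _ => rfl⟩
      obtain ⟨g, hg, hb⟩ := List.mem_map.1 h2
      exact ⟨g, hg, hb⟩
    · rw [if_neg h2]
      constructor
      · intro h; exact absurd h (by simp)
      · rintro ⟨g, hg, hb⟩
        exact absurd (List.mem_map.2 ⟨g, hg, hb⟩) h2

lemma eval_verifier_bot {P : Type} {p : P} {subs} :
    Game.eval (Game.node p (some .verifier) subs) = Game.bot ↔
      ∀ g ∈ subs, Game.eval g = Game.bot := by
  rw [Game.eval_node]
  by_cases h1 : ∀ g ∈ subs.map Game.eval, g = Game.bot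
  · rw [if_pos h1]
    exact ⟨fun _ g hg => h1 _ (List.mem_map_of_mem hg), fun _ => rfl⟩
  · rw [if_neg h1]
    have h2 : ¬ ∀ g ∈ subs, Game.eval g = Game.bot := by
      intro h; exact h1 (by simpa using h)
    simp only [h2, iff_false]
    split <;> simp

lemma eval_verifier_top {P : Type} {p : P} {subs} :
    Game.eval (Game.node p (some .verifier) subs) = Game.top ↔
      ∃ g ∈ subs, Game.eval g = Game.top := by
  rw [Game.eval_node]
  by_cases h1 : ∀ g ∈ subs.map Game.eval, g = Game.bot
  · rw [if_pos h1]
    constructor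
    · intro h; exact absurd h (by simp)
    · rintro ⟨g, hg, hb⟩
      have := h1 _ (List.mem_map_of_mem hg)
      rw [hb] at this; exact absurd this (by simp)
  · rw [if_neg h1]
    by_cases h2 : Game.top ∈ subs.map Game.eval
    · rw [if_pos h2]
      refine ⟨fun _ => ?_, fun _ => rfl⟩
      obtain ⟨g, hg, hb⟩ := List.mem_map.1 h2
      exact ⟨g, hg, hb⟩
    · rw [if_neg h2]
      constructor
      · intro h; exact absurd h (by simp)
      · rintro ⟨g, hg, hb⟩
        exact absurd (List.mem_map.2 ⟨g, hg, hb⟩) h2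

lemma eval_none {P : Type} {p : P} {subs} :
    Game.eval (Game.node p none subs) = Game.node p none (subs.map Game.eval) := by
  rw [Game.eval_node]

lemma convert_node {p : EPos} {o subs} :
    convert (Game.node p o subs) = Game.node (p.1.restrict p.1.nulValues, p.2.2) o
      (subs.attach.filterMap fun g =>
        if g.1.IsFullNodeE then some (convert g.1) else none) := by
  rw [convert]

lemma mem_convert_subs {subs : List (Game EPos)} {x : Game CPos} :
    (x ∈ subs.attach.filterMap fun g =>
        if (g.1 : Game EPos).IsFullNodeE then some (convert g.1) else none) ↔
      ∃ g ∈ subs, g.IsFullNodeE ∧ x = convert g := by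
  rw [List.mem_filterMap]
  constructor
  · rintro ⟨a, -, ha⟩
    split at ha
    · exact ⟨a.1, a.2, by assumption, (Option.some.inj ha).symm⟩
    · exact absurd ha (by simp)
  · rintro ⟨g, hg, hfull, rfl⟩
    exact ⟨⟨g, hg⟩, List.mem_attach _ _, by rw [if_pos hfull]⟩

end Dev3
section Dev4

lemma posEquivE_full_iff {p q : EPos} (h : PosEquivE p q) :
    p.1.FullyInterpreted ↔ q.1.FullyInterpreted := by
  obtain ⟨-, -, -, -, f, hiso, -⟩ := h
  constructor
  · intro hf c hc
    rw [← (hiso.interp_iff c (by rw [hiso.voc_eq]; exact hc))]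
    exact hf c (by rw [hiso.voc_eq]; exact hc)
  · intro hf c hc
    rw [(hiso.interp_iff c hc)]
    exact hf c (by rw [← hiso.voc_eq]; exact hc)

lemma isFullNodeE_transfer : ∀ {g g' : Game EPos}, GEquivE g g' →
    (g.IsFullNodeE ↔ g'.IsFullNodeE)
  | .top, .top, _ => Iff.rfl
  | .bot, .bot, _ => Iff.rfl
  | .node p o s, .node q o' t, h => by
    rw [GEquivE, gequiv_node_iff] at h
    exact posEquivE_full_iff h.1
  | .top, .bot, h => by simp [GEquivE, GEquiv] at h
  | .top, .node _ _ _, h => by simp [GEquivE, GEquiv] at h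
  | .bot, .top, h => by simp [GEquivE, GEquiv] at h
  | .bot, .node _ _ _, h => by simp [GEquivE, GEquiv] at h
  | .node _ _ _, .top, h => by simp [GEquivE, GEquiv] at h
  | .node _ _ _, .bot, h => by simp [GEquivE, GEquiv] at h

lemma posNice_transfer {p q : EPos} (he : PosEquivE p q) (hn : PosNice p) : PosNice q := by
  obtain ⟨hX1, hphi, hsp, hsq, f, hiso, hfix⟩ := he
  constructor
  · rw [← hX1]; exact hsq
  · intro c hc x hx
    have hc' : c ∈ p.1.voc.nulls := by rw [hiso.voc_eq]; exact hc
    have hsome : (p.1.nul c).isSome := by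
      rw [hiso.interp_iff c hc', hx]; rfl
    obtain ⟨y, hy⟩ := Option.isSome_iff_exists.1 hsome
    have := hiso.nul_map c hc' y hy
    rw [hx] at this
    have hxy : x = f y := Option.some.inj this
    rw [hxy]
    exact hiso.bij.mapsTo (hn.2 c hc' y hy)

theorem niceG_transfer : ∀ (g g' : Game EPos), GEquivE g g' → NiceG g → NiceG g'
  | .top, .top, _, _ => by rw [NiceG]; trivial
  | .bot, .bot, _, _ => by rw [NiceG]; trivial
  | .node p o s, .node q o' t, he, hn => by
    rw [GEquivE, gequiv_node_iff] at he
    obtain ⟨hpe, rfl, e, hsub⟩ := he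
    rw [niceG_node] at hn ⊢
    refine ⟨posNice_transfer hpe hn.1, fun g' hg' => ?_⟩
    have h1 := hsub (e.symm ⟨g', hg'⟩)
    rw [Equiv.apply_symm_apply] at h1
    exact niceG_transfer _ _ h1 (hn.2 _ (e.symm ⟨g', hg'⟩).2)
  | .top, .bot, h, _ => by simp [GEquivE, GEquiv] at h
  | .top, .node _ _ _, h, _ => by simp [GEquivE, GEquiv] at h
  | .bot, .top, h, _ => by simp [GEquivE, GEquiv] at h
  | .bot, .node _ _ _, h, _ => by simp [GEquivE, GEquiv] at h
  | .node _ _ _, .top, h, _ => by simp [GEquivE, GEquiv] at h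
  | .node _ _ _, .bot, h, _ => by simp [GEquivE, GEquiv] at h
termination_by g => sizeOf g
decreasing_by exact Game.sizeOf_lt_node (e.symm ⟨g', hg'⟩).2

end Dev4
section Dev5

lemma iso_symm {A B : Struc} {h : ℕ → ℕ}
    (hg : ∀ c ∈ A.voc.nulls, ∀ x, A.nul c = some x → x ∈ A.univ)
    (hi : Iso A B h) :
    Iso B A (Function.invFunOn h ↑A.univ) := by
  set h' := Function.invFunOn h (↑A.univ : Set ℕ) with hh'
  have hinv : Set.InvOn h' h ↑A.univ ↑B.univ := hi.bij.invOn_invFunOn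
  have hbij' : Set.BijOn h' ↑B.univ ↑A.univ := Set.BijOn.symm hinv.symm hi.bij
  refine ⟨hi.voc_eq.symm, hbij', ?_, ?_, ?_⟩
  · intro c hc
    exact (hi.interp_iff c (by rw [hi.voc_eq]; exact hc)).symm
  · intro c hc y hy
    have hc' : c ∈ A.voc.nulls := by rw [hi.voc_eq]; exact hc
    have hsome : (A.nul c).isSome := by
      rw [hi.interp_iff c hc', hy]; rfl
    obtain ⟨x, hx⟩ := Option.isSome_iff_exists.1 hsome
    have hmap := hi.nul_map c hc' x hx
    rw [hy] at hmap
    have hyx : y = h x := Option.some.inj hmap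
    have hxA : x ∈ A.univ := hg c hc' x hx
    rw [hx, hyx]
    congr 1
    exact (hinv.1 hxA).symm
  · intro R hR t ht
    have hmem : ∀ x ∈ t.map h', x ∈ A.univ := by
      intro x hx
      obtain ⟨y, hy, rfl⟩ := List.mem_map.1 hx
      exact hbij'.mapsTo (ht y hy)
    have := hi.rel_map R (by rw [hi.voc_eq]; exact hR) (t.map h') hmem
    rw [this]
    have : (t.map h').map h = t := by
      rw [List.map_map]
      have : ∀ x ∈ t, (h ∘ h') x = x := fun x hx => hinv.2 (ht x hx)
      rw [List.map_congr_left this]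
      simp
    rw [this]

lemma posEquivE_symm {p q : EPos} (hn : PosNice p) (he : PosEquivE p q) : PosEquivE q p := by
  obtain ⟨hX, hphi, hsp, hsq, f, hiso, hfix⟩ := he
  refine ⟨hX.symm, hphi.symm, hX ▸ hsq, hX ▸ hsp, Function.invFunOn f ↑p.1.univ,
    iso_symm hn.2 hiso, ?_⟩
  intro a ha
  have ha' : a ∈ p.2.1 := by rw [hX]; exact ha
  have haU : a ∈ p.1.univ := hn.1 ha'
  calc Function.invFunOn f ↑p.1.univ a
      = Function.invFunOn f ↑p.1.univ (f a) := by rw [hfix a ha']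
    _ = a := hiso.bij.invOn_invFunOn.1 haU

theorem gequivE_symm : ∀ (g g' : Game EPos), NiceG g → GEquivE g g' → GEquivE g' g
  | .top, .top, _, _ => by rw [GEquivE, GEquiv]; trivial
  | .bot, .bot, _, _ => by rw [GEquivE, GEquiv]; trivial
  | .node p o s, .node q o' t, hn, he => by
    rw [GEquivE, gequiv_node_iff] at he
    obtain ⟨hpe, rfl, e, hsub⟩ := he
    rw [niceG_node] at hn
    rw [GEquivE, gequiv_node_iff]
    refine ⟨posEquivE_symm hn.1 hpe, rfl, e.symm, fun g' => ?_⟩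
    have h1 := hsub (e.symm g')
    rw [Equiv.apply_symm_apply] at h1
    exact gequivE_symm _ _ (hn.2 _ (e.symm g').2) h1
  | .top, .bot, _, h => by simp [GEquivE, GEquiv] at h
  | .top, .node _ _ _, _, h => by simp [GEquivE, GEquiv] at h
  | .bot, .top, _, h => by simp [GEquivE, GEquiv] at h
  | .bot, .node _ _ _, _, h => by simp [GEquivE, GEquiv] at h
  | .node _ _ _, .top, _, h => by simp [GEquivE, GEquiv] at h
  | .node _ _ _, .bot, _, h => by simp [GEquivE, GEquiv] at h
termination_by g => sizeOf g
decreasing_by exact Game.sizeOf_lt_node (e.symm g').2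

end Dev5
section Dev6

theorem evalconvert_transfer : ∀ (g g' : Game EPos), GEquivE g g' →
    (Game.eval (convert g) = Game.top ↔ Game.eval (convert g') = Game.top) ∧
    (Game.eval (convert g) = Game.bot ↔ Game.eval (convert g') = Game.bot)
  | .top, .top, _ => ⟨Iff.rfl, Iff.rfl⟩
  | .bot, .bot, _ => ⟨Iff.rfl, Iff.rfl⟩
  | .node p o s, .node q o' t, he => by
    rw [GEquivE, gequiv_node_iff] at he
    obtain ⟨hpe, rfl, e, hsub⟩ := he
    rw [convert_node, convert_node]
    set cs := s.attach.filterMap fun g =>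
      if (g.1 : Game EPos).IsFullNodeE then some (convert g.1) else none with hcs
    set cs' := t.attach.filterMap fun g =>
      if (g.1 : Game EPos).IsFullNodeE then some (convert g.1) else none with hcs'
    have fwd : ∀ x ∈ cs, ∃ y ∈ cs',
        (Game.eval x = Game.top ↔ Game.eval y = Game.top) ∧
        (Game.eval x = Game.bot ↔ Game.eval y = Game.bot) := by
      intro x hx
      obtain ⟨g0, hg0, hfull, rfl⟩ := mem_convert_subs.1 hx
      refine ⟨convert (e ⟨g0, hg0⟩).1, mem_convert_subs.2
        ⟨(e ⟨g0, hg0⟩).1, (e ⟨g0, hg0⟩).2,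
          (isFullNodeE_transfer (hsub ⟨g0, hg0⟩)).1 hfull, rfl⟩, ?_⟩
      exact evalconvert_transfer g0 (e ⟨g0, hg0⟩).1 (hsub ⟨g0, hg0⟩)
    have bwd : ∀ y ∈ cs', ∃ x ∈ cs,
        (Game.eval x = Game.top ↔ Game.eval y = Game.top) ∧
        (Game.eval x = Game.bot ↔ Game.eval y = Game.bot) := by
      intro y hy
      obtain ⟨g1, hg1, hfull, rfl⟩ := mem_convert_subs.1 hy
      have h1 := hsub (e.symm ⟨g1, hg1⟩)
      rw [Equiv.apply_symm_apply] at h1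
      refine ⟨convert (e.symm ⟨g1, hg1⟩).1, mem_convert_subs.2
        ⟨(e.symm ⟨g1, hg1⟩).1, (e.symm ⟨g1, hg1⟩).2,
          (isFullNodeE_transfer h1).2 hfull, rfl⟩, ?_⟩
      exact evalconvert_transfer (e.symm ⟨g1, hg1⟩).1 g1 h1
    have htop_all : (∀ x ∈ cs, Game.eval x = Game.top) ↔
        (∀ y ∈ cs', Game.eval y = Game.top) := by
      constructor
      · intro H y hy; obtain ⟨x, hx, hi, -⟩ := bwd y hy; exact hi.1 (H x hx)
      · intro H x hx; obtain ⟨y, hy, hi, -⟩ := fwd x hx; exact hi.2 (H y hy)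
    have hbot_all : (∀ x ∈ cs, Game.eval x = Game.bot) ↔
        (∀ y ∈ cs', Game.eval y = Game.bot) := by
      constructor
      · intro H y hy; obtain ⟨x, hx, -, hi⟩ := bwd y hy; exact hi.1 (H x hx)
      · intro H x hx; obtain ⟨y, hy, -, hi⟩ := fwd x hx; exact hi.2 (H y hy)
    have hex_top : (∃ x ∈ cs, Game.eval x = Game.top) ↔
        (∃ y ∈ cs', Game.eval y = Game.top) := by
      constructor
      · rintro ⟨x, hx, hb⟩; obtain ⟨y, hy, hi, -⟩ := fwd x hx; exact ⟨y, hy, hi.1 hb⟩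
      · rintro ⟨y, hy, hb⟩; obtain ⟨x, hx, hi, -⟩ := bwd y hy; exact ⟨x, hx, hi.2 hb⟩
    have hex_bot : (∃ x ∈ cs, Game.eval x = Game.bot) ↔
        (∃ y ∈ cs', Game.eval y = Game.bot) := by
      constructor
      · rintro ⟨x, hx, hb⟩; obtain ⟨y, hy, -, hi⟩ := fwd x hx; exact ⟨y, hy, hi.1 hb⟩
      · rintro ⟨y, hy, hb⟩; obtain ⟨x, hx, -, hi⟩ := bwd y hy; exact ⟨x, hx, hi.2 hb⟩
    match o with
    | some .falsifier =>
      rw [eval_falsifier_top, eval_falsifier_top, eval_falsifier_bot, eval_falsifier_bot]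
      exact ⟨htop_all, hex_bot⟩
    | some .verifier =>
      rw [eval_verifier_top, eval_verifier_top, eval_verifier_bot, eval_verifier_bot]
      exact ⟨hex_top, hbot_all⟩
    | none =>
      rw [eval_none, eval_none]
      constructor <;> constructor <;> (intro h; exact absurd h (by simp))
  | .top, .bot, h => by simp [GEquivE, GEquiv] at h
  | .top, .node _ _ _, h => by simp [GEquivE, GEquiv] at h
  | .bot, .top, h => by simp [GEquivE, GEquiv] at h
  | .bot, .node _ _ _, h => by simp [GEquivE, GEquiv] at h
  | .node _ _ _, .top, h => by simp [GEquivE, GEquiv] at h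
  | .node _ _ _, .bot, h => by simp [GEquivE, GEquiv] at h
termination_by g => sizeOf g
decreasing_by
  · exact Game.sizeOf_lt_node hg0
  · exact Game.sizeOf_lt_node (e.symm ⟨g1, hg1⟩).2

theorem dedupEquiv_complete {l : List (Game EPos)} (hn : ∀ g ∈ l, NiceG g) :
    ∀ g ∈ l, ∃ k ∈ dedupEquiv l, GEquivE g k := by
  induction l with
  | nil => intro g h; simp at h
  | cons a l ih =>
    intro g hg
    rw [dedupEquiv]
    split
    · rename_i hex
      rcases List.mem_cons.1 hg with rfl | hg'
      · exact hex
      · exact ih (fun x hx => hn x (List.mem_cons_of_mem _ hx)) g hg'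
    · rcases List.mem_cons.1 hg with rfl | hg'
      · exact ⟨g, List.mem_cons_self, gequivE_refl g (hn g (List.mem_cons_self))⟩
      · obtain ⟨k, hk, hke⟩ := ih (fun x hx => hn x (List.mem_cons_of_mem _ hx)) g hg'
        exact ⟨k, List.mem_cons_of_mem _ hk, hke⟩

end Dev6
section Dev7

lemma mapM_isSome {f : ℕ → Option ℕ} {cs : List ℕ} :
    (∃ t, cs.mapM f = some t) ↔ ∀ c ∈ cs, (f c).isSome := by
  induction cs with
  | nil => exact ⟨fun _ => by simp, fun _ => ⟨[], rfl⟩⟩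
  | cons c cs ih =>
    rw [List.mapM_cons]
    cases hf : f c with
    | none =>
      simp only [hf, Option.bind_none, List.mem_cons]
      constructor
      · rintro ⟨t, h⟩; cases h
      · intro h; have := h c (Or.inl rfl); rw [hf] at this; cases this
    | some x =>
      simp only [hf, Option.bind_some, List.mem_cons]
      cases ht : cs.mapM f with
      | none =>
        rw [ht] at ih
        constructor
        · rintro ⟨t, h⟩; simp at h
        · intro h
          obtain ⟨t, h⟩ := ih.2 fun d hd => h d (Or.inr hd)
          cases h
      | some ts =>
        rw [ht] at ih
        constructor
        · intro _ d hd
          rcases hd with rfl | hd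
          · rw [hf]; rfl
          · exact (ih.1 ⟨ts, rfl⟩) d hd
        · intro _; exact ⟨x :: ts, by simp⟩

lemma mapM_congr {f g : ℕ → Option ℕ} {cs : List ℕ}
    (h : ∀ c ∈ cs, f c = g c) : cs.mapM f = cs.mapM g := by
  induction cs with
  | nil => rfl
  | cons c cs ih =>
    rw [List.mapM_cons, List.mapM_cons, h c (List.mem_cons_self),
      ih (fun d hd => h d (List.mem_cons_of_mem _ hd))]

lemma addNul_nul_self {A : Struc} {c : ℕ} {u : Option ℕ} : (A.addNul c u).nul c = u := by
  simp [Struc.addNul]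

lemma addNul_comm {A : Struc} {c d : ℕ} {u v : Option ℕ} (hcd : c ≠ d) :
    (A.addNul c u).addNul d v = (A.addNul d v).addNul c u := by
  simp only [Struc.addNul, Vocab.addNul]
  congr 1
  · rw [Finset.insert_comm]
  · funext e
    by_cases h1 : e = d <;> by_cases h2 : e = c <;>
      simp [h1, h2, hcd, Ne.symm hcd]

lemma addNul_addRel_comm {A : Struc} {c R : ℕ} {u : Option ℕ} {U : Finset ℕ} :
    (A.addNul c u).addRel R U = (A.addRel R U).addNul c u := rfl

def MSO.FreshN (c : ℕ) : MSO → Prop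
  | .atom _ _ => True
  | .natom _ _ => True
  | .conj φ ψ => MSO.FreshN c φ ∧ MSO.FreshN c ψ
  | .disj φ ψ => MSO.FreshN c φ ∧ MSO.FreshN c ψ
  | .fall d φ => d ≠ c ∧ MSO.FreshN c φ
  | .fex d φ => d ≠ c ∧ MSO.FreshN c φ
  | .sall _ φ => MSO.FreshN c φ
  | .sex _ φ => MSO.FreshN c φ

lemma wf_freshN {ar : ℕ → ℕ} {c : ℕ} : ∀ {φ : MSO} {τ : Vocab},
    MSO.wf ar τ φ → c ∈ τ.nulls → MSO.FreshN c φ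
  | .atom _ _, _, _, _ => trivial
  | .natom _ _, _, _, _ => trivial
  | .conj φ ψ, τ, h, hc => ⟨wf_freshN h.1 hc, wf_freshN h.2 hc⟩
  | .disj φ ψ, τ, h, hc => ⟨wf_freshN h.1 hc, wf_freshN h.2 hc⟩
  | .fall d φ, τ, h, hc =>
    ⟨fun hdc => h.1 (hdc ▸ hc), wf_freshN h.2 (Finset.mem_insert_of_mem hc)⟩
  | .fex d φ, τ, h, hc =>
    ⟨fun hdc => h.1 (hdc ▸ hc), wf_freshN h.2 (Finset.mem_insert_of_mem hc)⟩
  | .sall R φ, τ, h, hc => wf_freshN (φ := φ) h.2.2 hc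
  | .sex R φ, τ, h, hc => wf_freshN (φ := φ) h.2.2 hc

def SatV : Struc → MSO → Prop
  | C, .atom R cs => Sat C (.atom R cs)
  | C, .natom R cs => Sat C (.natom R cs)
  | C, .conj φ ψ => SatV C φ ∧ SatV C ψ
  | C, .disj φ ψ => SatV C φ ∨ SatV C ψ
  | C, .fall c φ => SatV (C.addNul c none) φ ∧ ∀ a ∈ C.univ, SatV (C.addNul c (some a)) φ
  | C, .fex c φ => SatV (C.addNul c none) φ ∨ ∃ a ∈ C.univ, SatV (C.addNul c (some a)) φ
  | C, .sall R φ => ∀ U ⊆ C.univ, SatV (C.addRel R U) φ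
  | C, .sex R φ => ∃ U ⊆ C.univ, SatV (C.addRel R U) φ

def SatF : Struc → MSO → Prop
  | C, .atom R cs => (∀ c ∈ cs, (C.nul c).isSome) ∧ ¬ Sat C (.atom R cs)
  | C, .natom R cs => (∀ c ∈ cs, (C.nul c).isSome) ∧ ¬ Sat C (.natom R cs)
  | C, .conj φ ψ => SatF C φ ∨ SatF C ψ
  | C, .disj φ ψ => SatF C φ ∧ SatF C ψ
  | C, .fall c φ => SatF (C.addNul c none) φ ∨ ∃ a ∈ C.univ, SatF (C.addNul c (some a)) φ
  | C, .fex c φ => SatF (C.addNul c none) φ ∧ ∀ a ∈ C.univ, SatF (C.addNul c (some a)) φ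
  | C, .sall R φ => ∃ U ⊆ C.univ, SatF (C.addRel R U) φ
  | C, .sex R φ => ∀ U ⊆ C.univ, SatF (C.addRel R U) φ

end Dev7
section Dev8

lemma mapM_addNul_ne {C : Struc} {c : ℕ} {u v : Option ℕ} {cs : List ℕ} (hcs : c ∉ cs) :
    cs.mapM ((C.addNul c u).nul) = cs.mapM ((C.addNul c v).nul) :=
  mapM_congr fun d hd => by
    have hdc : d ≠ c := fun h => hcs (h ▸ hd)
    simp [Struc.addNul, hdc]

lemma sat_atom_mono {C : Struc} {c : ℕ} {u : Option ℕ} {R : ℕ} {cs : List ℕ}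
    (h : Sat (C.addNul c none) (.atom R cs)) : Sat (C.addNul c u) (.atom R cs) := by
  obtain ⟨t, hm, hr⟩ := h
  have hcs : c ∉ cs := by
    intro hc
    have := mapM_isSome.1 ⟨t, hm⟩ c hc
    rw [addNul_nul_self] at this; cases this
  exact ⟨t, by rw [mapM_addNul_ne hcs]; exact hm, hr⟩

lemma sat_natom_mono {C : Struc} {c : ℕ} {u : Option ℕ} {R : ℕ} {cs : List ℕ}
    (h : Sat (C.addNul c none) (.natom R cs)) : Sat (C.addNul c u) (.natom R cs) := by
  obtain ⟨t, hm, hr⟩ := h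
  have hcs : c ∉ cs := by
    intro hc
    have := mapM_isSome.1 ⟨t, hm⟩ c hc
    rw [addNul_nul_self] at this; cases this
  exact ⟨t, by rw [mapM_addNul_ne hcs]; exact hm, hr⟩

theorem satV_mono {c : ℕ} (φ : MSO) : ∀ (C : Struc) (u : ℕ), MSO.FreshN c φ →
    SatV (C.addNul c none) φ → SatV (C.addNul c (some u)) φ := by
  induction φ with
  | atom R cs => exact fun C u _ h => sat_atom_mono h
  | natom R cs => exact fun C u _ h => sat_natom_mono h
  | conj φ ψ ihφ ihψ =>
    exact fun C u hF h => ⟨ihφ C u hF.1 h.1, ihψ C u hF.2 h.2⟩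
  | disj φ ψ ihφ ihψ =>
    rintro C u hF (h | h)
    · exact Or.inl (ihφ C u hF.1 h)
    · exact Or.inr (ihψ C u hF.2 h)
  | fall d φ ih =>
    rintro C u hF ⟨h0, hall⟩
    have hcd : c ≠ d := Ne.symm hF.1
    rw [addNul_comm hcd] at h0
    constructor
    · rw [addNul_comm hcd]
      exact ih _ u hF.2 h0
    · intro a ha
      have := hall a ha
      rw [addNul_comm hcd] at this
      rw [addNul_comm hcd]
      exact ih _ u hF.2 this
  | fex d φ ih =>
    rintro C u hF (h0 | ⟨a, ha, h⟩)
    · left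
      have hcd : c ≠ d := Ne.symm hF.1
      rw [addNul_comm hcd] at h0
      rw [addNul_comm hcd]
      exact ih _ u hF.2 h0
    · right
      refine ⟨a, ha, ?_⟩
      have hcd : c ≠ d := Ne.symm hF.1
      rw [addNul_comm hcd] at h
      rw [addNul_comm hcd]
      exact ih _ u hF.2 h
  | sall R φ ih =>
    intro C u hF h U hU
    have := h U hU
    rw [addNul_addRel_comm] at this
    rw [addNul_addRel_comm]
    exact ih _ u hF this
  | sex R φ ih =>
    rintro C u hF ⟨U, hU, h⟩
    refine ⟨U, hU, ?_⟩
    rw [addNul_addRel_comm] at h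
    rw [addNul_addRel_comm]
    exact ih _ u hF h

theorem satF_mono {c : ℕ} (φ : MSO) : ∀ (C : Struc) (u : ℕ), MSO.FreshN c φ →
    SatF (C.addNul c none) φ → SatF (C.addNul c (some u)) φ := by
  induction φ with
  | atom R cs =>
    rintro C u _ ⟨hd, hns⟩
    have hcs : c ∉ cs := by
      intro hc
      have := hd c hc
      rw [addNul_nul_self] at this; cases this
    refine ⟨fun d hd' => ?_, fun hs => hns ?_⟩
    · have hdc : d ≠ c := fun h => hcs (h ▸ hd')
      have := hd d hd'
      simp only [Struc.addNul, hdc, if_neg hdc] at this ⊢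
      exact this
    · obtain ⟨t, hm, hr⟩ := hs
      exact ⟨t, by rw [mapM_addNul_ne hcs]; exact hm, hr⟩
  | natom R cs =>
    rintro C u _ ⟨hd, hns⟩
    have hcs : c ∉ cs := by
      intro hc
      have := hd c hc
      rw [addNul_nul_self] at this; cases this
    refine ⟨fun d hd' => ?_, fun hs => hns ?_⟩
    · have hdc : d ≠ c := fun h => hcs (h ▸ hd')
      have := hd d hd'
      simp only [Struc.addNul, hdc, if_neg hdc] at this ⊢
      exact this
    · obtain ⟨t, hm, hr⟩ := hs
      exact ⟨t, by rw [mapM_addNul_ne hcs]; exact hm, hr⟩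
  | conj φ ψ ihφ ihψ =>
    rintro C u hF (h | h)
    · exact Or.inl (ihφ C u hF.1 h)
    · exact Or.inr (ihψ C u hF.2 h)
  | disj φ ψ ihφ ihψ =>
    exact fun C u hF h => ⟨ihφ C u hF.1 h.1, ihψ C u hF.2 h.2⟩
  | fall d φ ih =>
    rintro C u hF (h0 | ⟨a, ha, h⟩)
    · left
      have hcd : c ≠ d := Ne.symm hF.1
      rw [addNul_comm hcd] at h0
      rw [addNul_comm hcd]
      exact ih _ u hF.2 h0
    · right
      refine ⟨a, ha, ?_⟩
      have hcd : c ≠ d := Ne.symm hF.1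
      rw [addNul_comm hcd] at h
      rw [addNul_comm hcd]
      exact ih _ u hF.2 h
  | fex d φ ih =>
    rintro C u hF ⟨h0, hall⟩
    have hcd : c ≠ d := Ne.symm hF.1
    rw [addNul_comm hcd] at h0
    constructor
    · rw [addNul_comm hcd]
      exact ih _ u hF.2 h0
    · intro a ha
      have := hall a ha
      rw [addNul_comm hcd] at this
      rw [addNul_comm hcd]
      exact ih _ u hF.2 this
  | sall R φ ih =>
    rintro C u hF ⟨U, hU, h⟩
    refine ⟨U, hU, ?_⟩
    rw [addNul_addRel_comm] at h
    rw [addNul_addRel_comm]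
    exact ih _ u hF h
  | sex R φ ih =>
    intro C u hF h U hU
    have := h U hU
    rw [addNul_addRel_comm] at this
    rw [addNul_addRel_comm]
    exact ih _ u hF this

end Dev8
section Dev9

lemma full_addNul_some {B : Struc} {c a : ℕ} (h : B.FullyInterpreted) :
    (B.addNul c (some a)).FullyInterpreted := by
  intro d hd
  simp only [Struc.addNul]
  by_cases hdc : d = c
  · rw [if_pos hdc]; rfl
  · rw [if_neg hdc]
    exact h d (by
      rcases Finset.mem_insert.1 hd with h' | h'
      · exact absurd h' hdc
      · exact h')

lemma full_addRel {B : Struc} {R : ℕ} {U : Finset ℕ} (h : B.FullyInterpreted) :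
    (B.addRel R U).FullyInterpreted := h

theorem sound {ar : ℕ → ℕ} (φ : MSO) : ∀ (B : Struc), MSO.wf ar B.voc φ →
    B.FullyInterpreted → B.univ.Nonempty →
    (SatV B φ → Sat B φ) ∧ (SatF B φ → ¬ Sat B φ) := by
  induction φ with
  | atom R cs => exact fun B _ _ _ => ⟨id, fun h => h.2⟩
  | natom R cs => exact fun B _ _ _ => ⟨id, fun h => h.2⟩
  | conj φ ψ ihφ ihψ =>
    intro B hwf hfull hne
    refine ⟨fun h => ⟨(ihφ B hwf.1 hfull hne).1 h.1, (ihψ B hwf.2 hfull hne).1 h.2⟩, ?_⟩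
    rintro (h | h) hs
    · exact (ihφ B hwf.1 hfull hne).2 h hs.1
    · exact (ihψ B hwf.2 hfull hne).2 h hs.2
  | disj φ ψ ihφ ihψ =>
    intro B hwf hfull hne
    constructor
    · rintro (h | h)
      · exact Or.inl ((ihφ B hwf.1 hfull hne).1 h)
      · exact Or.inr ((ihψ B hwf.2 hfull hne).1 h)
    · rintro ⟨h1, h2⟩ (hs | hs)
      · exact (ihφ B hwf.1 hfull hne).2 h1 hs
      · exact (ihψ B hwf.2 hfull hne).2 h2 hs
  | fall c φ ih =>
    intro B hwf hfull hne
    have hFr : MSO.FreshN c φ := wf_freshN hwf.2 (Finset.mem_insert_self c _)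
    constructor
    · rintro ⟨h0, hall⟩ a ha
      exact (ih _ hwf.2 (full_addNul_some hfull) hne).1 (hall a ha)
    · rintro (h0 | ⟨a, ha, h⟩) hs
      · obtain ⟨a0, ha0⟩ := hne
        have := satF_mono φ B a0 hFr h0
        exact (ih _ hwf.2 (full_addNul_some hfull) ⟨a0, ha0⟩).2 this (hs a0 ha0)
      · exact (ih _ hwf.2 (full_addNul_some hfull) hne).2 h (hs a ha)
  | fex c φ ih =>
    intro B hwf hfull hne
    have hFr : MSO.FreshN c φ := wf_freshN hwf.2 (Finset.mem_insert_self c _)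
    constructor
    · rintro (h0 | ⟨a, ha, h⟩)
      · obtain ⟨a0, ha0⟩ := hne
        have := satV_mono φ B a0 hFr h0
        exact ⟨a0, ha0, (ih _ hwf.2 (full_addNul_some hfull) ⟨a0, ha0⟩).1 this⟩
      · exact ⟨a, ha, (ih _ hwf.2 (full_addNul_some hfull) hne).1 h⟩
    · rintro ⟨h0, hall⟩ ⟨a, ha, hs⟩
      exact (ih _ hwf.2 (full_addNul_some hfull) hne).2 (hall a ha) hs
  | sall R φ ih =>
    intro B hwf hfull hne
    constructor
    · intro h U hU
      exact (ih _ hwf.2.2 (full_addRel hfull) hne).1 (h U hU)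
    · rintro ⟨U, hU, h⟩ hs
      exact (ih _ hwf.2.2 (full_addRel hfull) hne).2 h (hs U hU)
  | sex R φ ih =>
    intro B hwf hfull hne
    constructor
    · rintro ⟨U, hU, h⟩
      exact ⟨U, hU, (ih _ hwf.2.2 (full_addRel hfull) hne).1 h⟩
    · rintro h ⟨U, hU, hs⟩
      exact (ih _ hwf.2.2 (full_addRel hfull) hne).2 (h U hU) hs

end Dev9
section Dev10

lemma reduce_node {p : EPos} {o : Option Player} {subs : List (Game EPos)} :
    reduce (Game.node p o subs) =
      (if p.2.2.IsAtomic then Game.eval (Game.node p o subs)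
      else if p.2.2.IsUniversal ∧ Game.bot ∈ subs.map reduce then Game.bot
      else if p.2.2.IsExistential ∧ Game.top ∈ subs.map reduce then Game.top
      else if dedupEquiv ((subs.map reduce).filter fun g =>
          decide (g ≠ Game.top ∧ g ≠ Game.bot)) = []
        then Game.eval (Game.node p o ([] : List (Game EPos)))
        else Game.node p o (dedupEquiv ((subs.map reduce).filter fun g =>
          decide (g ≠ Game.top ∧ g ≠ Game.bot)))) := by
  rw [reduce.eq_def]
  simp only []
  have : (subs.attach.map fun g => reduce g.1) = subs.map reduce := by simp
  rw [this]

lemma filter_eq_nil_iff {rs : List (Game EPos)} :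
    ((rs.filter fun g => decide (g ≠ Game.top ∧ g ≠ Game.bot)) = []) ↔
      ∀ g ∈ rs, g = Game.top ∨ g = Game.bot := by
  rw [List.filter_eq_nil_iff]
  constructor
  · intro h g hg
    by_contra hc
    push_neg at hc
    exact h g hg (by simp [hc.1, hc.2])
  · intro h g hg
    rcases h g hg with rfl | rfl <;> simp

lemma mem_filter_ne {rs : List (Game EPos)} {g : Game EPos}
    (hg : g ∈ rs) (h1 : g ≠ Game.top) (h2 : g ≠ Game.bot) :
    g ∈ rs.filter fun g => decide (g ≠ Game.top ∧ g ≠ Game.bot) := by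
  rw [List.mem_filter]
  exact ⟨hg, by simp [h1, h2]⟩

lemma reduce_univ_iffs {p : EPos} {subs : List (Game EPos)}
    (hA : ¬ p.2.2.IsAtomic) (hU : p.2.2.IsUniversal) (hE : ¬ p.2.2.IsExistential) :
    (reduce (Game.node p (some .falsifier) subs) = Game.top ↔
      ∀ g ∈ subs, reduce g = Game.top) ∧
    (reduce (Game.node p (some .falsifier) subs) = Game.bot ↔
      ∃ g ∈ subs, reduce g = Game.bot) := by
  rw [reduce_node, if_neg hA]
  by_cases hb : Game.bot ∈ subs.map reduce
  · rw [if_pos ⟨hU, hb⟩]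
    obtain ⟨g, hg, hgr⟩ := List.mem_map.1 hb
    constructor
    · constructor
      · intro h; exact absurd h (by simp)
      · intro h
        rw [h g hg] at hgr
        exact absurd hgr (by simp)
    · exact ⟨fun _ => ⟨g, hg, hgr⟩, fun _ => rfl⟩
  · rw [if_neg (fun (h : _ ∧ _) => hb h.2), if_neg (fun (h : _ ∧ _) => hE h.1)]
    have hnotbot : ¬ ∃ g ∈ subs, reduce g = Game.bot := by
      rintro ⟨g, hg, hgr⟩
      exact hb (List.mem_map.2 ⟨g, hg, hgr⟩)
    by_cases hk : dedupEquiv ((subs.map reduce).filter fun g =>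
        decide (g ≠ Game.top ∧ g ≠ Game.bot)) = []
    · rw [if_pos hk]
      rw [dedupEquiv_eq_nil_iff, filter_eq_nil_iff] at hk
      have halltop : ∀ g ∈ subs, reduce g = Game.top := by
        intro g hg
        rcases hk _ (List.mem_map.2 ⟨g, hg, rfl⟩) with h | h
        · exact h
        · exact absurd (List.mem_map.2 ⟨g, hg, h⟩) hb
      have : Game.eval (Game.node p (some Player.falsifier) ([] : List (Game EPos)))
          = Game.top := by
        rw [eval_falsifier_top]; intro g hg; simp at hg
      rw [this]
      refine ⟨⟨fun _ => halltop, fun _ => rfl⟩, ?_⟩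
      simp only [hnotbot, iff_false]
      simp
    · rw [if_neg hk]
      have hnotall : ¬ ∀ g ∈ subs, reduce g = Game.top := by
        intro hall
        apply hk
        rw [dedupEquiv_eq_nil_iff, filter_eq_nil_iff]
        intro g hg
        obtain ⟨g0, hg0, rfl⟩ := List.mem_map.1 hg
        exact Or.inl (hall g0 hg0)
      constructor
      · simp only [hnotall, iff_false]; simp
      · simp only [hnotbot, iff_false]; simp

lemma reduce_exist_iffs {p : EPos} {subs : List (Game EPos)}
    (hA : ¬ p.2.2.IsAtomic) (hU : ¬ p.2.2.IsUniversal) (hE : p.2.2.IsExistential) :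
    (reduce (Game.node p (some .verifier) subs) = Game.top ↔
      ∃ g ∈ subs, reduce g = Game.top) ∧
    (reduce (Game.node p (some .verifier) subs) = Game.bot ↔
      ∀ g ∈ subs, reduce g = Game.bot) := by
  rw [reduce_node, if_neg hA, if_neg (fun (h : _ ∧ _) => hU h.1)]
  by_cases ht : Game.top ∈ subs.map reduce
  · rw [if_pos ⟨hE, ht⟩]
    obtain ⟨g, hg, hgr⟩ := List.mem_map.1 ht
    constructor
    · exact ⟨fun _ => ⟨g, hg, hgr⟩, fun _ => rfl⟩
    · constructor
      · intro h; exact absurd h (by simp)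
      · intro h
        rw [h g hg] at hgr
        exact absurd hgr (by simp)
  · rw [if_neg (fun (h : _ ∧ _) => ht h.2)]
    have hnottop : ¬ ∃ g ∈ subs, reduce g = Game.top := by
      rintro ⟨g, hg, hgr⟩
      exact ht (List.mem_map.2 ⟨g, hg, hgr⟩)
    by_cases hk : dedupEquiv ((subs.map reduce).filter fun g =>
        decide (g ≠ Game.top ∧ g ≠ Game.bot)) = []
    · rw [if_pos hk]
      rw [dedupEquiv_eq_nil_iff, filter_eq_nil_iff] at hk
      have hallbot : ∀ g ∈ subs, reduce g = Game.bot := by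
        intro g hg
        rcases hk _ (List.mem_map.2 ⟨g, hg, rfl⟩) with h | h
        · exact absurd (List.mem_map.2 ⟨g, hg, h⟩) ht
        · exact h
      have : Game.eval (Game.node p (some Player.verifier) ([] : List (Game EPos)))
          = Game.bot := by
        rw [eval_verifier_bot]; intro g hg; simp at hg
      rw [this]
      refine ⟨?_, ⟨fun _ => hallbot, fun _ => rfl⟩⟩
      simp only [hnottop, iff_false]
      simp
    · rw [if_neg hk]
      have hnotall : ¬ ∀ g ∈ subs, reduce g = Game.bot := by
        intro hall
        apply hk
        rw [dedupEquiv_eq_nil_iff, filter_eq_nil_iff]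
        intro g hg
        obtain ⟨g0, hg0, rfl⟩ := List.mem_map.1 hg
        exact Or.inr (hall g0 hg0)
      constructor
      · simp only [hnottop, iff_false]; simp
      · simp only [hnotall, iff_false]; simp

end Dev10
section Dev11

theorem L1 (φ : MSO) : ∀ (C : Struc) (X : Finset ℕ),
    (reduce (EMC φ C X) = Game.top ↔ SatV C φ) ∧
    (reduce (EMC φ C X) = Game.bot ↔ SatF C φ) := by
  induction φ with
  | atom R cs =>
    intro C X
    have hEMC : EMC (.atom R cs) C X =
        Game.node (C.restrict (X ∪ C.nulValues), X, .atom R cs)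
          (if ∀ c ∈ cs, (C.nul c).isSome then
            (if Sat C (.atom R cs) then some .falsifier else some .verifier)
           else none) [] := rfl
    rw [hEMC, reduce_node, if_pos (show (MSO.atom R cs).IsAtomic from trivial)]
    by_cases h1 : ∀ c ∈ cs, (C.nul c).isSome
    · rw [if_pos h1]
      by_cases h2 : Sat C (.atom R cs)
      · rw [if_pos h2]
        constructor
        · rw [eval_falsifier_top]
          exact ⟨fun _ => h2, fun _ g hg => absurd hg (by simp)⟩
        · rw [eval_falsifier_bot]
          constructor
          · rintro ⟨g, hg, -⟩; exact absurd hg (by simp)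
          · rintro ⟨-, hns⟩; exact absurd h2 hns
      · rw [if_neg h2]
        constructor
        · rw [eval_verifier_top]
          constructor
          · rintro ⟨g, hg, -⟩; exact absurd hg (by simp)
          · intro h; exact absurd h h2
        · rw [eval_verifier_bot]
          exact ⟨fun _ => ⟨h1, h2⟩, fun _ g hg => absurd hg (by simp)⟩
    · rw [if_neg h1, eval_none]
      constructor
      · constructor
        · intro h; exact absurd h (by simp)
        · intro h
          exact absurd (mapM_isSome.1 ⟨h.choose, h.choose_spec.1⟩) h1
      · constructor
        · intro h; exact absurd h (by simp)
        · intro h; exact absurd h.1 h1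
  | natom R cs =>
    intro C X
    have hEMC : EMC (.natom R cs) C X =
        Game.node (C.restrict (X ∪ C.nulValues), X, .natom R cs)
          (if ∀ c ∈ cs, (C.nul c).isSome then
            (if Sat C (.natom R cs) then some .falsifier else some .verifier)
           else none) [] := rfl
    rw [hEMC, reduce_node, if_pos (show (MSO.natom R cs).IsAtomic from trivial)]
    by_cases h1 : ∀ c ∈ cs, (C.nul c).isSome
    · rw [if_pos h1]
      by_cases h2 : Sat C (.natom R cs)
      · rw [if_pos h2]
        constructor
        · rw [eval_falsifier_top]
          exact ⟨fun _ => h2, fun _ g hg => absurd hg (by simp)⟩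
        · rw [eval_falsifier_bot]
          constructor
          · rintro ⟨g, hg, -⟩; exact absurd hg (by simp)
          · rintro ⟨-, hns⟩; exact absurd h2 hns
      · rw [if_neg h2]
        constructor
        · rw [eval_verifier_top]
          constructor
          · rintro ⟨g, hg, -⟩; exact absurd hg (by simp)
          · intro h; exact absurd h h2
        · rw [eval_verifier_bot]
          exact ⟨fun _ => ⟨h1, h2⟩, fun _ g hg => absurd hg (by simp)⟩
    · rw [if_neg h1, eval_none]
      constructor
      · constructor
        · intro h; exact absurd h (by simp)
        · intro h
          exact absurd (mapM_isSome.1 ⟨h.choose, h.choose_spec.1⟩) h1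
      · constructor
        · intro h; exact absurd h (by simp)
        · intro h; exact absurd h.1 h1
  | conj φ ψ ihφ ihψ =>
    intro C X
    have hEMC : EMC (.conj φ ψ) C X =
        Game.node (C.restrict (X ∪ C.nulValues), X, .conj φ ψ) (some .falsifier)
          [EMC φ C X, EMC ψ C X] := rfl
    rw [hEMC]
    have h := reduce_univ_iffs (p := (C.restrict (X ∪ C.nulValues), X, .conj φ ψ))
      (subs := [EMC φ C X, EMC ψ C X]) (fun h => h) trivial (fun h => h)
    rw [h.1, h.2]
    constructor
    · constructor
      · intro hall
        exact ⟨(ihφ C X).1.1 (hall _ (by simp)), (ihψ C X).1.1 (hall _ (by simp))⟩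
      · rintro ⟨h1, h2⟩ g hg
        rcases List.mem_cons.1 hg with rfl | hg
        · exact (ihφ C X).1.2 h1
        · rcases List.mem_cons.1 hg with rfl | hg
          · exact (ihψ C X).1.2 h2
          · exact absurd hg (by simp)
    · constructor
      · rintro ⟨g, hg, hr⟩
        rcases List.mem_cons.1 hg with rfl | hg
        · exact Or.inl ((ihφ C X).2.1 hr)
        · rcases List.mem_cons.1 hg with rfl | hg
          · exact Or.inr ((ihψ C X).2.1 hr)
          · exact absurd hg (by simp)
      · rintro (h1 | h1)
        · exact ⟨_, by simp, (ihφ C X).2.2 h1⟩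
        · exact ⟨_, by simp, (ihψ C X).2.2 h1⟩
  | disj φ ψ ihφ ihψ =>
    intro C X
    have hEMC : EMC (.disj φ ψ) C X =
        Game.node (C.restrict (X ∪ C.nulValues), X, .disj φ ψ) (some .verifier)
          [EMC φ C X, EMC ψ C X] := rfl
    rw [hEMC]
    have h := reduce_exist_iffs (p := (C.restrict (X ∪ C.nulValues), X, .disj φ ψ))
      (subs := [EMC φ C X, EMC ψ C X]) (fun h => h) (fun h => h) trivial
    rw [h.1, h.2]
    constructor
    · constructor
      · rintro ⟨g, hg, hr⟩
        rcases List.mem_cons.1 hg with rfl | hg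
        · exact Or.inl ((ihφ C X).1.1 hr)
        · rcases List.mem_cons.1 hg with rfl | hg
          · exact Or.inr ((ihψ C X).1.1 hr)
          · exact absurd hg (by simp)
      · rintro (h1 | h1)
        · exact ⟨_, by simp, (ihφ C X).1.2 h1⟩
        · exact ⟨_, by simp, (ihψ C X).1.2 h1⟩
    · constructor
      · intro hall
        exact ⟨(ihφ C X).2.1 (hall _ (by simp)), (ihψ C X).2.1 (hall _ (by simp))⟩
      · rintro ⟨h1, h2⟩ g hg
        rcases List.mem_cons.1 hg with rfl | hg
        · exact (ihφ C X).2.2 h1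
        · rcases List.mem_cons.1 hg with rfl | hg
          · exact (ihψ C X).2.2 h2
          · exact absurd hg (by simp)
  | fall c φ ih =>
    intro C X
    have hEMC : EMC (.fall c φ) C X =
        Game.node (C.restrict (X ∪ C.nulValues), X, .fall c φ) (some .falsifier)
          ((none :: C.univ.toList.map some).map fun u => EMC φ (C.addNul c u) X) := rfl
    rw [hEMC]
    have h := reduce_univ_iffs (p := (C.restrict (X ∪ C.nulValues), X, .fall c φ))
      (subs := (none :: C.univ.toList.map some).map fun u => EMC φ (C.addNul c u) X)
      (fun h => h) trivial (fun h => h)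
    rw [h.1, h.2]
    constructor
    · constructor
      · intro hall
        refine ⟨(ih _ X).1.1 (hall _ (by simp)), fun a ha => (ih _ X).1.1 (hall _ ?_)⟩
        exact List.mem_map.2 ⟨some a, by simp [Finset.mem_toList, ha], rfl⟩
      · rintro ⟨h0, hA⟩ g hg
        obtain ⟨u, hu, rfl⟩ := List.mem_map.1 hg
        rcases List.mem_cons.1 hu with rfl | hu
        · exact (ih _ X).1.2 h0
        · obtain ⟨a, ha, rfl⟩ := List.mem_map.1 hu
          exact (ih _ X).1.2 (hA a (Finset.mem_toList.1 ha))
    · constructor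
      · rintro ⟨g, hg, hr⟩
        obtain ⟨u, hu, rfl⟩ := List.mem_map.1 hg
        rcases List.mem_cons.1 hu with rfl | hu
        · exact Or.inl ((ih _ X).2.1 hr)
        · obtain ⟨a, ha, rfl⟩ := List.mem_map.1 hu
          exact Or.inr ⟨a, Finset.mem_toList.1 ha, (ih _ X).2.1 hr⟩
      · rintro (h0 | ⟨a, ha, h1⟩)
        · exact ⟨_, List.mem_map.2 ⟨none, by simp, rfl⟩, (ih _ X).2.2 h0⟩
        · exact ⟨_, List.mem_map.2 ⟨some a, by simp [Finset.mem_toList, ha], rfl⟩,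
            (ih _ X).2.2 h1⟩
  | fex c φ ih =>
    intro C X
    have hEMC : EMC (.fex c φ) C X =
        Game.node (C.restrict (X ∪ C.nulValues), X, .fex c φ) (some .verifier)
          ((none :: C.univ.toList.map some).map fun u => EMC φ (C.addNul c u) X) := rfl
    rw [hEMC]
    have h := reduce_exist_iffs (p := (C.restrict (X ∪ C.nulValues), X, .fex c φ))
      (subs := (none :: C.univ.toList.map some).map fun u => EMC φ (C.addNul c u) X)
      (fun h => h) (fun h => h) trivial
    rw [h.1, h.2]
    constructor
    · constructor
      · rintro ⟨g, hg, hr⟩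
        obtain ⟨u, hu, rfl⟩ := List.mem_map.1 hg
        rcases List.mem_cons.1 hu with rfl | hu
        · exact Or.inl ((ih _ X).1.1 hr)
        · obtain ⟨a, ha, rfl⟩ := List.mem_map.1 hu
          exact Or.inr ⟨a, Finset.mem_toList.1 ha, (ih _ X).1.1 hr⟩
      · rintro (h0 | ⟨a, ha, h1⟩)
        · exact ⟨_, List.mem_map.2 ⟨none, by simp, rfl⟩, (ih _ X).1.2 h0⟩
        · exact ⟨_, List.mem_map.2 ⟨some a, by simp [Finset.mem_toList, ha], rfl⟩,
            (ih _ X).1.2 h1⟩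
    · constructor
      · intro hall
        refine ⟨(ih _ X).2.1 (hall _ (by simp)), fun a ha => (ih _ X).2.1 (hall _ ?_)⟩
        exact List.mem_map.2 ⟨some a, by simp [Finset.mem_toList, ha], rfl⟩
      · rintro ⟨h0, hA⟩ g hg
        obtain ⟨u, hu, rfl⟩ := List.mem_map.1 hg
        rcases List.mem_cons.1 hu with rfl | hu
        · exact (ih _ X).2.2 h0
        · obtain ⟨a, ha, rfl⟩ := List.mem_map.1 hu
          exact (ih _ X).2.2 (hA a (Finset.mem_toList.1 ha))
  | sall R φ ih =>
    intro C X
    have hEMC : EMC (.sall R φ) C X =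
        Game.node (C.restrict (X ∪ C.nulValues), X, .sall R φ) (some .falsifier)
          (C.univ.powerset.toList.map fun U => EMC φ (C.addRel R U) X) := rfl
    rw [hEMC]
    have h := reduce_univ_iffs (p := (C.restrict (X ∪ C.nulValues), X, .sall R φ))
      (subs := C.univ.powerset.toList.map fun U => EMC φ (C.addRel R U) X)
      (fun h => h) trivial (fun h => h)
    rw [h.1, h.2]
    constructor
    · constructor
      · intro hall U hU
        exact (ih _ X).1.1 (hall _ (List.mem_map.2
          ⟨U, Finset.mem_toList.2 (Finset.mem_powerset.2 hU), rfl⟩))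
      · intro hA g hg
        obtain ⟨U, hU, rfl⟩ := List.mem_map.1 hg
        exact (ih _ X).1.2 (hA U (Finset.mem_powerset.1 (Finset.mem_toList.1 hU)))
    · constructor
      · rintro ⟨g, hg, hr⟩
        obtain ⟨U, hU, rfl⟩ := List.mem_map.1 hg
        exact ⟨U, Finset.mem_powerset.1 (Finset.mem_toList.1 hU), (ih _ X).2.1 hr⟩
      · rintro ⟨U, hU, h1⟩
        exact ⟨_, List.mem_map.2
          ⟨U, Finset.mem_toList.2 (Finset.mem_powerset.2 hU), rfl⟩, (ih _ X).2.2 h1⟩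
  | sex R φ ih =>
    intro C X
    have hEMC : EMC (.sex R φ) C X =
        Game.node (C.restrict (X ∪ C.nulValues), X, .sex R φ) (some .verifier)
          (C.univ.powerset.toList.map fun U => EMC φ (C.addRel R U) X) := rfl
    rw [hEMC]
    have h := reduce_exist_iffs (p := (C.restrict (X ∪ C.nulValues), X, .sex R φ))
      (subs := C.univ.powerset.toList.map fun U => EMC φ (C.addRel R U) X)
      (fun h => h) (fun h => h) trivial
    rw [h.1, h.2]
    constructor
    · constructor
      · rintro ⟨g, hg, hr⟩
        obtain ⟨U, hU, rfl⟩ := List.mem_map.1 hg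
        exact ⟨U, Finset.mem_powerset.1 (Finset.mem_toList.1 hU), (ih _ X).1.1 hr⟩
      · rintro ⟨U, hU, h1⟩
        exact ⟨_, List.mem_map.2
          ⟨U, Finset.mem_toList.2 (Finset.mem_powerset.2 hU), rfl⟩, (ih _ X).1.2 h1⟩
    · constructor
      · intro hall U hU
        exact (ih _ X).2.1 (hall _ (List.mem_map.2
          ⟨U, Finset.mem_toList.2 (Finset.mem_powerset.2 hU), rfl⟩))
      · intro hA g hg
        obtain ⟨U, hU, rfl⟩ := List.mem_map.1 hg
        exact (ih _ X).2.2 (hA U (Finset.mem_powerset.1 (Finset.mem_toList.1 hU)))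

end Dev11
section Dev12

def DGS (C : Struc) : Prop := ∀ c ∈ C.voc.nulls, ∀ x, C.nul c = some x → x ∈ C.univ

lemma dgs_addNul {C : Struc} {c : ℕ} {u : Option ℕ} (h : DGS C)
    (hu : ∀ a, u = some a → a ∈ C.univ) : DGS (C.addNul c u) := by
  intro d hd x hx
  simp only [Struc.addNul] at hx ⊢
  by_cases hdc : d = c
  · rw [if_pos hdc] at hx
    exact hu x hx
  · rw [if_neg hdc] at hx
    rcases Finset.mem_insert.1 hd with h' | h'
    · exact absurd h' hdc
    · exact h d h' x hx

lemma dgs_addRel {C : Struc} {R : ℕ} {U : Finset ℕ} (h : DGS C) : DGS (C.addRel R U) := h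

lemma posNice_restrict {C : Struc} {X : Finset ℕ} {φ : MSO} (hX : X ⊆ C.univ)
    (hdg : DGS C) : PosNice (C.restrict (X ∪ C.nulValues), X, φ) := by
  constructor
  · intro x hx
    simp only [Struc.restrict, Finset.mem_inter, Finset.mem_union]
    exact ⟨hX hx, Or.inl hx⟩
  · intro c hc x hx
    simp only [Struc.restrict] at hx hc ⊢
    split at hx
    · rename_i y heq
      split at hx
      · rename_i hy
        obtain rfl := Option.some.inj hx
        exact Finset.mem_inter.2 ⟨hdg c hc _ heq, hy⟩
      · cases hx
    · cases hx

lemma niceG_top : NiceG Game.top := by rw [NiceG]; trivial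

lemma niceG_bot : NiceG Game.bot := by rw [NiceG]; trivial

lemma eval_top {P : Type} : Game.eval (Game.top : Game P) = Game.top := by
  rw [Game.eval.eq_def]

lemma eval_bot {P : Type} : Game.eval (Game.bot : Game P) = Game.bot := by
  rw [Game.eval.eq_def]

lemma reduce_top : reduce Game.top = Game.top := by rw [reduce.eq_def]

lemma reduce_bot : reduce Game.bot = Game.bot := by rw [reduce.eq_def]

lemma convert_top : convert Game.top = Game.top := by rw [convert.eq_def]

lemma convert_bot : convert Game.bot = Game.bot := by rw [convert.eq_def]

theorem niceG_EMC (φ : MSO) : ∀ (C : Struc) (X : Finset ℕ), X ⊆ C.univ → DGS C →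
    NiceG (EMC φ C X) := by
  induction φ with
  | atom R cs =>
    intro C X hX hdg
    rw [show EMC (.atom R cs) C X = Game.node (C.restrict (X ∪ C.nulValues), X, .atom R cs)
      _ [] from rfl, niceG_node]
    exact ⟨posNice_restrict hX hdg, fun g hg => absurd hg (by simp)⟩
  | natom R cs =>
    intro C X hX hdg
    rw [show EMC (.natom R cs) C X = Game.node (C.restrict (X ∪ C.nulValues), X, .natom R cs)
      _ [] from rfl, niceG_node]
    exact ⟨posNice_restrict hX hdg, fun g hg => absurd hg (by simp)⟩
  | conj φ ψ ihφ ihψ =>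
    intro C X hX hdg
    rw [show EMC (.conj φ ψ) C X = Game.node (C.restrict (X ∪ C.nulValues), X, .conj φ ψ)
      (some .falsifier) [EMC φ C X, EMC ψ C X] from rfl, niceG_node]
    refine ⟨posNice_restrict hX hdg, fun g hg => ?_⟩
    rcases List.mem_cons.1 hg with rfl | hg
    · exact ihφ C X hX hdg
    · rcases List.mem_cons.1 hg with rfl | hg
      · exact ihψ C X hX hdg
      · exact absurd hg (by simp)
  | disj φ ψ ihφ ihψ =>
    intro C X hX hdg
    rw [show EMC (.disj φ ψ) C X = Game.node (C.restrict (X ∪ C.nulValues), X, .disj φ ψ)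
      (some .verifier) [EMC φ C X, EMC ψ C X] from rfl, niceG_node]
    refine ⟨posNice_restrict hX hdg, fun g hg => ?_⟩
    rcases List.mem_cons.1 hg with rfl | hg
    · exact ihφ C X hX hdg
    · rcases List.mem_cons.1 hg with rfl | hg
      · exact ihψ C X hX hdg
      · exact absurd hg (by simp)
  | fall c φ ih =>
    intro C X hX hdg
    rw [show EMC (.fall c φ) C X = Game.node (C.restrict (X ∪ C.nulValues), X, .fall c φ)
      (some .falsifier) ((none :: C.univ.toList.map some).map fun u =>
        EMC φ (C.addNul c u) X) from rfl, niceG_node]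
    refine ⟨posNice_restrict hX hdg, fun g hg => ?_⟩
    obtain ⟨u, hu, rfl⟩ := List.mem_map.1 hg
    refine ih _ X hX (dgs_addNul hdg ?_)
    rcases List.mem_cons.1 hu with rfl | hu
    · intro a h; cases h
    · obtain ⟨a, ha, rfl⟩ := List.mem_map.1 hu
      intro b hb
      obtain rfl := Option.some.inj hb
      exact Finset.mem_toList.1 ha
  | fex c φ ih =>
    intro C X hX hdg
    rw [show EMC (.fex c φ) C X = Game.node (C.restrict (X ∪ C.nulValues), X, .fex c φ)
      (some .verifier) ((none :: C.univ.toList.map some).map fun u =>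
        EMC φ (C.addNul c u) X) from rfl, niceG_node]
    refine ⟨posNice_restrict hX hdg, fun g hg => ?_⟩
    obtain ⟨u, hu, rfl⟩ := List.mem_map.1 hg
    refine ih _ X hX (dgs_addNul hdg ?_)
    rcases List.mem_cons.1 hu with rfl | hu
    · intro a h; cases h
    · obtain ⟨a, ha, rfl⟩ := List.mem_map.1 hu
      intro b hb
      obtain rfl := Option.some.inj hb
      exact Finset.mem_toList.1 ha
  | sall R φ ih =>
    intro C X hX hdg
    rw [show EMC (.sall R φ) C X = Game.node (C.restrict (X ∪ C.nulValues), X, .sall R φ)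
      (some .falsifier) (C.univ.powerset.toList.map fun U =>
        EMC φ (C.addRel R U) X) from rfl, niceG_node]
    refine ⟨posNice_restrict hX hdg, fun g hg => ?_⟩
    obtain ⟨U, hU, rfl⟩ := List.mem_map.1 hg
    exact ih _ X hX (dgs_addRel hdg)
  | sex R φ ih =>
    intro C X hX hdg
    rw [show EMC (.sex R φ) C X = Game.node (C.restrict (X ∪ C.nulValues), X, .sex R φ)
      (some .verifier) (C.univ.powerset.toList.map fun U =>
        EMC φ (C.addRel R U) X) from rfl, niceG_node]
    refine ⟨posNice_restrict hX hdg, fun g hg => ?_⟩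
    obtain ⟨U, hU, rfl⟩ := List.mem_map.1 hg
    exact ih _ X hX (dgs_addRel hdg)

theorem niceG_eval : ∀ (g : Game EPos), NiceG g → NiceG (Game.eval g)
  | .top, h => by rw [eval_top]; exact h
  | .bot, h => by rw [eval_bot]; exact h
  | .node p o subs, h => by
    rw [niceG_node] at h
    have hsub : ∀ x ∈ subs.map Game.eval, NiceG x := by
      intro x hx
      obtain ⟨y, hy, rfl⟩ := List.mem_map.1 hx
      exact niceG_eval y (h.2 y hy)
    have hnode : NiceG (Game.node p o (subs.map Game.eval)) :=
      niceG_node.2 ⟨h.1, hsub⟩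
    rw [Game.eval_node]
    split
    · split
      · exact niceG_top
      · split
        · exact niceG_bot
        · exact hnode
    · split
      · exact niceG_bot
      · split
        · exact niceG_top
        · exact hnode
    · exact hnode
termination_by g => sizeOf g
decreasing_by exact Game.sizeOf_lt_node hy

theorem niceG_reduce : ∀ (g : Game EPos), NiceG g → NiceG (reduce g)
  | .top, h => by rw [reduce_top]; exact h
  | .bot, h => by rw [reduce_bot]; exact h
  | .node p o subs, h => by
    have hn := h
    rw [niceG_node] at hn
    rw [reduce_node]
    split
    · exact niceG_eval _ h
    · split
      · exact niceG_bot
      · split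
        · exact niceG_top
        · split
          · exact niceG_eval _ (niceG_node.2 ⟨hn.1, fun g hg => absurd hg (by simp)⟩)
          · rw [niceG_node]
            refine ⟨hn.1, fun g hg => ?_⟩
            have hg2 := List.mem_filter.1 (dedupEquiv_subset hg)
            obtain ⟨y, hy, rfl⟩ := List.mem_map.1 hg2.1
            exact niceG_reduce y (hn.2 y hy)
termination_by g => sizeOf g
decreasing_by exact Game.sizeOf_lt_node hy

end Dev12
section Dev13

lemma EMC_node (ψ : MSO) (C : Struc) (X : Finset ℕ) :
    ∃ o subs, EMC ψ C X = Game.node (C.restrict (X ∪ C.nulValues), X, ψ) o subs := by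
  cases ψ <;> exact ⟨_, _, rfl⟩

lemma eval_node_shape {P : Type} (p : P) (o : Option Player) (subs : List (Game P)) :
    Game.eval (Game.node p o subs) = Game.top ∨
    Game.eval (Game.node p o subs) = Game.bot ∨
    ∃ ks, Game.eval (Game.node p o subs) = Game.node p o ks := by
  rw [Game.eval_node]
  split
  · split
    · exact Or.inl rfl
    · split
      · exact Or.inr (Or.inl rfl)
      · exact Or.inr (Or.inr ⟨_, rfl⟩)
  · split
    · exact Or.inr (Or.inl rfl)
    · split
      · exact Or.inl rfl
      · exact Or.inr (Or.inr ⟨_, rfl⟩)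
  · exact Or.inr (Or.inr ⟨_, rfl⟩)

lemma reduce_node_shape (p : EPos) (o : Option Player) (subs : List (Game EPos)) :
    reduce (Game.node p o subs) = Game.top ∨
    reduce (Game.node p o subs) = Game.bot ∨
    ∃ ks, reduce (Game.node p o subs) = Game.node p o ks := by
  rw [reduce_node]
  split
  · exact eval_node_shape p o subs
  · split
    · exact Or.inr (Or.inl rfl)
    · split
      · exact Or.inl rfl
      · split
        · exact eval_node_shape p o []
        · exact Or.inr (Or.inr ⟨_, rfl⟩)

lemma full_restrict_full {C : Struc} (X : Finset ℕ) (h : C.FullyInterpreted) :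
    (C.restrict (X ∪ C.nulValues)).FullyInterpreted := by
  intro c hc
  obtain ⟨x, hx⟩ := Option.isSome_iff_exists.1 (h c hc)
  have hmem : x ∈ C.nulValues := Finset.mem_biUnion.2 ⟨c, hc, by simp [hx]⟩
  simp only [Struc.restrict, hx]
  rw [if_pos (Finset.mem_union.2 (Or.inr hmem))]
  rfl

lemma not_full_addNul_none {C : Struc} {c : ℕ} {s : Finset ℕ} :
    ¬ ((C.addNul c none).restrict s).FullyInterpreted := by
  intro h
  have hc : c ∈ ((C.addNul c none).restrict s).voc.nulls := Finset.mem_insert_self c _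
  have := h c hc
  simp [Struc.restrict, Struc.addNul] at this

lemma reduce_EMC_root_full {ψ : MSO} {C : Struc} {X : Finset ℕ}
    (h1 : reduce (EMC ψ C X) ≠ Game.top) (h2 : reduce (EMC ψ C X) ≠ Game.bot)
    (hfull : C.FullyInterpreted) : (reduce (EMC ψ C X)).IsFullNodeE := by
  obtain ⟨o, subs, hE⟩ := EMC_node ψ C X
  rw [hE] at h1 h2 ⊢
  rcases reduce_node_shape _ o subs with h | h | ⟨ks, h⟩
  · exact absurd h h1
  · exact absurd h h2
  · rw [h]
    exact full_restrict_full X hfull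

lemma reduce_EMC_root_not_full {ψ : MSO} {C : Struc} {c : ℕ} {X : Finset ℕ}
    (h1 : reduce (EMC ψ (C.addNul c none) X) ≠ Game.top)
    (h2 : reduce (EMC ψ (C.addNul c none) X) ≠ Game.bot) :
    ¬ (reduce (EMC ψ (C.addNul c none) X)).IsFullNodeE := by
  obtain ⟨o, subs, hE⟩ := EMC_node ψ (C.addNul c none) X
  rw [hE] at h1 h2 ⊢
  rcases reduce_node_shape _ o subs with h | h | ⟨ks, h⟩
  · exact absurd h h1
  · exact absurd h h2
  · rw [h]
    exact not_full_addNul_none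

lemma mem_kept_iff {subs : List (Game EPos)} {k : Game EPos}
    (hk : k ∈ dedupEquiv ((subs.map reduce).filter fun g =>
      decide (g ≠ Game.top ∧ g ≠ Game.bot))) :
    ∃ g ∈ subs, k = reduce g ∧ k ≠ Game.top ∧ k ≠ Game.bot := by
  have h1 := List.mem_filter.1 (dedupEquiv_subset hk)
  obtain ⟨g, hg, rfl⟩ := List.mem_map.1 h1.1
  have h2 := of_decide_eq_true h1.2
  exact ⟨g, hg, rfl, h2.1, h2.2⟩

lemma main_univ {p : EPos} {subs : List (Game EPos)} {S : Prop}
    (hA : ¬ p.2.2.IsAtomic) (hU : p.2.2.IsUniversal) (hE : ¬ p.2.2.IsExistential)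
    (hnice : ∀ g ∈ subs, NiceG (reduce g))
    (hbot : (∃ g ∈ subs, reduce g = Game.bot) → ¬ S)
    (htop : (∀ g ∈ subs, reduce g = Game.top) → S)
    (hfull_eval : S → ∀ g ∈ subs, (reduce g).IsFullNodeE → reduce g ≠ Game.top →
      reduce g ≠ Game.bot → Game.eval (convert (reduce g)) = Game.top)
    (hwitness : ¬ S → (∀ g ∈ subs, reduce g ≠ Game.bot) → ∃ g ∈ subs,
      reduce g ≠ Game.top ∧ (reduce g).IsFullNodeE ∧
      Game.eval (convert (reduce g)) = Game.bot) :
    Game.eval (convert (reduce (Game.node p (some .falsifier) subs))) =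
      (if S then Game.top else Game.bot) := by
  rw [reduce_node, if_neg hA]
  by_cases hb : Game.bot ∈ subs.map reduce
  · rw [if_pos ⟨hU, hb⟩]
    obtain ⟨g, hg, hgr⟩ := List.mem_map.1 hb
    rw [if_neg (hbot ⟨g, hg, hgr⟩), convert_bot, eval_bot]
  · have hbotfree : ∀ g ∈ subs, reduce g ≠ Game.bot := by
      intro g hg h
      exact hb (List.mem_map.2 ⟨g, hg, h⟩)
    rw [if_neg (fun (h : _ ∧ _) => hb h.2), if_neg (fun (h : _ ∧ _) => hE h.1)]
    by_cases hk : dedupEquiv ((subs.map reduce).filter fun g =>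
        decide (g ≠ Game.top ∧ g ≠ Game.bot)) = []
    · rw [if_pos hk]
      rw [dedupEquiv_eq_nil_iff, filter_eq_nil_iff] at hk
      have halltop : ∀ g ∈ subs, reduce g = Game.top := by
        intro g hg
        rcases hk _ (List.mem_map.2 ⟨g, hg, rfl⟩) with h | h
        · exact h
        · exact absurd h (hbotfree g hg)
      rw [if_pos (htop halltop)]
      have : Game.eval (Game.node p (some Player.falsifier) ([] : List (Game EPos)))
          = Game.top := by
        rw [eval_falsifier_top]; intro g hg; simp at hg
      rw [this, convert_top, eval_top]
    · rw [if_neg hk, convert_node]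
      by_cases hS : S
      · rw [if_pos hS, eval_falsifier_top]
        intro x hx
        obtain ⟨k, hkk, hfullk, rfl⟩ := mem_convert_subs.1 hx
        obtain ⟨g, hg, rfl, hnt, hnb⟩ := mem_kept_iff hkk
        exact hfull_eval hS g hg hfullk hnt hnb
      · rw [if_neg hS, eval_falsifier_bot]
        obtain ⟨g, hg, hnt, hfullg, hevalg⟩ := hwitness hS hbotfree
        have hmemf : reduce g ∈ (subs.map reduce).filter fun g =>
            decide (g ≠ Game.top ∧ g ≠ Game.bot) :=
          mem_filter_ne (List.mem_map.2 ⟨g, hg, rfl⟩) hnt (hbotfree g hg)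
        have hnall : ∀ x ∈ (subs.map reduce).filter fun g =>
            decide (g ≠ Game.top ∧ g ≠ Game.bot), NiceG x := by
          intro x hx
          have h1 := List.mem_filter.1 hx
          obtain ⟨g', hg', rfl⟩ := List.mem_map.1 h1.1
          exact hnice g' hg'
        obtain ⟨k, hkmem, hke⟩ := dedupEquiv_complete hnall _ hmemf
        refine ⟨convert k, mem_convert_subs.2
          ⟨k, hkmem, (isFullNodeE_transfer hke).1 hfullg, rfl⟩, ?_⟩
        exact (evalconvert_transfer _ _ hke).2.1 hevalg

lemma main_exist {p : EPos} {subs : List (Game EPos)} {S : Prop}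
    (hA : ¬ p.2.2.IsAtomic) (hU : ¬ p.2.2.IsUniversal) (hE : p.2.2.IsExistential)
    (hnice : ∀ g ∈ subs, NiceG (reduce g))
    (htop : (∃ g ∈ subs, reduce g = Game.top) → S)
    (hbot : (∀ g ∈ subs, reduce g = Game.bot) → ¬ S)
    (hfull_eval : ¬ S → ∀ g ∈ subs, (reduce g).IsFullNodeE → reduce g ≠ Game.top →
      reduce g ≠ Game.bot → Game.eval (convert (reduce g)) = Game.bot)
    (hwitness : S → (∀ g ∈ subs, reduce g ≠ Game.top) → ∃ g ∈ subs,
      reduce g ≠ Game.bot ∧ (reduce g).IsFullNodeE ∧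
      Game.eval (convert (reduce g)) = Game.top) :
    Game.eval (convert (reduce (Game.node p (some .verifier) subs))) =
      (if S then Game.top else Game.bot) := by
  rw [reduce_node, if_neg hA, if_neg (fun (h : _ ∧ _) => hU h.1)]
  by_cases ht : Game.top ∈ subs.map reduce
  · rw [if_pos ⟨hE, ht⟩]
    obtain ⟨g, hg, hgr⟩ := List.mem_map.1 ht
    rw [if_pos (htop ⟨g, hg, hgr⟩), convert_top, eval_top]
  · have htopfree : ∀ g ∈ subs, reduce g ≠ Game.top := by
      intro g hg h
      exact ht (List.mem_map.2 ⟨g, hg, h⟩)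
    rw [if_neg (fun (h : _ ∧ _) => ht h.2)]
    by_cases hk : dedupEquiv ((subs.map reduce).filter fun g =>
        decide (g ≠ Game.top ∧ g ≠ Game.bot)) = []
    · rw [if_pos hk]
      rw [dedupEquiv_eq_nil_iff, filter_eq_nil_iff] at hk
      have hallbot : ∀ g ∈ subs, reduce g = Game.bot := by
        intro g hg
        rcases hk _ (List.mem_map.2 ⟨g, hg, rfl⟩) with h | h
        · exact absurd h (htopfree g hg)
        · exact h
      rw [if_neg (hbot hallbot)]
      have : Game.eval (Game.node p (some Player.verifier) ([] : List (Game EPos)))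
          = Game.bot := by
        rw [eval_verifier_bot]; intro g hg; simp at hg
      rw [this, convert_bot, eval_bot]
    · rw [if_neg hk, convert_node]
      by_cases hS : S
      · rw [if_pos hS, eval_verifier_top]
        obtain ⟨g, hg, hnb, hfullg, hevalg⟩ := hwitness hS htopfree
        have hmemf : reduce g ∈ (subs.map reduce).filter fun g =>
            decide (g ≠ Game.top ∧ g ≠ Game.bot) :=
          mem_filter_ne (List.mem_map.2 ⟨g, hg, rfl⟩) (htopfree g hg) hnb
        have hnall : ∀ x ∈ (subs.map reduce).filter fun g =>
            decide (g ≠ Game.top ∧ g ≠ Game.bot), NiceG x := by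
          intro x hx
          have h1 := List.mem_filter.1 hx
          obtain ⟨g', hg', rfl⟩ := List.mem_map.1 h1.1
          exact hnice g' hg'
        obtain ⟨k, hkmem, hke⟩ := dedupEquiv_complete hnall _ hmemf
        refine ⟨convert k, mem_convert_subs.2
          ⟨k, hkmem, (isFullNodeE_transfer hke).1 hfullg, rfl⟩, ?_⟩
        exact (evalconvert_transfer _ _ hke).1.1 hevalg
      · rw [if_neg hS, eval_verifier_bot]
        intro x hx
        obtain ⟨k, hkk, hfullk, rfl⟩ := mem_convert_subs.1 hx
        obtain ⟨g, hg, rfl, hnt, hnb⟩ := mem_kept_iff hkk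
        exact hfull_eval hS g hg hfullk hnt hnb

end Dev13
section Dev14

theorem main_thm {ar : ℕ → ℕ} (φ : MSO) : ∀ (B : Struc) (X : Finset ℕ),
    MSO.wf ar B.voc φ → B.FullyInterpreted → B.univ.Nonempty → X ⊆ B.univ → DGS B →
    Game.eval (convert (reduce (EMC φ B X))) =
      (if Sat B φ then Game.top else Game.bot) := by
  induction φ with
  | atom R cs =>
    intro B X hwf hfull hne hX hdg
    by_cases hs : Sat B (.atom R cs)
    · rw [if_pos hs, (L1 (.atom R cs) B X).1.2 hs, convert_top, eval_top]
    · rw [if_neg hs, (L1 (.atom R cs) B X).2.2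
        ⟨fun c hc => hfull c (hwf.2.2 c hc), hs⟩, convert_bot, eval_bot]
  | natom R cs =>
    intro B X hwf hfull hne hX hdg
    by_cases hs : Sat B (.natom R cs)
    · rw [if_pos hs, (L1 (.natom R cs) B X).1.2 hs, convert_top, eval_top]
    · rw [if_neg hs, (L1 (.natom R cs) B X).2.2
        ⟨fun c hc => hfull c (hwf.2.2 c hc), hs⟩, convert_bot, eval_bot]
  | conj φ ψ ihφ ihψ =>
    intro B X hwf hfull hne hX hdg
    have soundφ := sound (ar := ar) φ B hwf.1 hfull hne
    have soundψ := sound (ar := ar) ψ B hwf.2 hfull hne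
    rw [show EMC (.conj φ ψ) B X = Game.node (B.restrict (X ∪ B.nulValues), X, .conj φ ψ)
      (some .falsifier) [EMC φ B X, EMC ψ B X] from rfl]
    refine main_univ (fun h => h) trivial (fun h => h) ?_ ?_ ?_ ?_ ?_
    · intro g hg
      rcases List.mem_cons.1 hg with rfl | hg
      · exact niceG_reduce _ (niceG_EMC φ B X hX hdg)
      · rcases List.mem_cons.1 hg with rfl | hg
        · exact niceG_reduce _ (niceG_EMC ψ B X hX hdg)
        · exact absurd hg (by simp)
    · rintro ⟨g, hg, hb⟩ hs
      rcases List.mem_cons.1 hg with rfl | hg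
      · exact soundφ.2 ((L1 φ B X).2.1 hb) hs.1
      · rcases List.mem_cons.1 hg with rfl | hg
        · exact soundψ.2 ((L1 ψ B X).2.1 hb) hs.2
        · exact absurd hg (by simp)
    · intro hall
      exact ⟨soundφ.1 ((L1 φ B X).1.1 (hall _ (by simp))),
        soundψ.1 ((L1 ψ B X).1.1 (hall _ (by simp)))⟩
    · intro hS g hg _ _ _
      rcases List.mem_cons.1 hg with rfl | hg
      · rw [ihφ B X hwf.1 hfull hne hX hdg, if_pos hS.1]
      · rcases List.mem_cons.1 hg with rfl | hg
        · rw [ihψ B X hwf.2 hfull hne hX hdg, if_pos hS.2]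
        · exact absurd hg (by simp)
    · intro hS hbf
      have hS' : ¬ (Sat B φ ∧ Sat B ψ) := hS
      rcases not_and_or.1 hS' with h | h
      · refine ⟨EMC φ B X, by simp, ?_, ?_, ?_⟩
        · intro ht; exact h (soundφ.1 ((L1 φ B X).1.1 ht))
        · exact reduce_EMC_root_full (fun ht => h (soundφ.1 ((L1 φ B X).1.1 ht)))
            (hbf _ (by simp)) hfull
        · rw [ihφ B X hwf.1 hfull hne hX hdg, if_neg h]
      · refine ⟨EMC ψ B X, by simp, ?_, ?_, ?_⟩
        · intro ht; exact h (soundψ.1 ((L1 ψ B X).1.1 ht))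
        · exact reduce_EMC_root_full (fun ht => h (soundψ.1 ((L1 ψ B X).1.1 ht)))
            (hbf _ (by simp)) hfull
        · rw [ihψ B X hwf.2 hfull hne hX hdg, if_neg h]
  | disj φ ψ ihφ ihψ =>
    intro B X hwf hfull hne hX hdg
    have soundφ := sound (ar := ar) φ B hwf.1 hfull hne
    have soundψ := sound (ar := ar) ψ B hwf.2 hfull hne
    rw [show EMC (.disj φ ψ) B X = Game.node (B.restrict (X ∪ B.nulValues), X, .disj φ ψ)
      (some .verifier) [EMC φ B X, EMC ψ B X] from rfl]
    refine main_exist (fun h => h) (fun h => h) trivial ?_ ?_ ?_ ?_ ?_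
    · intro g hg
      rcases List.mem_cons.1 hg with rfl | hg
      · exact niceG_reduce _ (niceG_EMC φ B X hX hdg)
      · rcases List.mem_cons.1 hg with rfl | hg
        · exact niceG_reduce _ (niceG_EMC ψ B X hX hdg)
        · exact absurd hg (by simp)
    · rintro ⟨g, hg, ht⟩
      rcases List.mem_cons.1 hg with rfl | hg
      · exact Or.inl (soundφ.1 ((L1 φ B X).1.1 ht))
      · rcases List.mem_cons.1 hg with rfl | hg
        · exact Or.inr (soundψ.1 ((L1 ψ B X).1.1 ht))
        · exact absurd hg (by simp)
    · rintro hall (hs | hs)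
      · exact soundφ.2 ((L1 φ B X).2.1 (hall _ (by simp))) hs
      · exact soundψ.2 ((L1 ψ B X).2.1 (hall _ (by simp))) hs
    · intro hS g hg _ _ _
      have hS' : ¬ (Sat B φ ∨ Sat B ψ) := hS
      rcases List.mem_cons.1 hg with rfl | hg
      · rw [ihφ B X hwf.1 hfull hne hX hdg, if_neg (fun h => hS' (Or.inl h))]
      · rcases List.mem_cons.1 hg with rfl | hg
        · rw [ihψ B X hwf.2 hfull hne hX hdg, if_neg (fun h => hS' (Or.inr h))]
        · exact absurd hg (by simp)
    · intro hS htf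
      have hS' : Sat B φ ∨ Sat B ψ := hS
      rcases hS' with h | h
      · refine ⟨EMC φ B X, by simp, ?_, ?_, ?_⟩
        · intro hb; exact soundφ.2 ((L1 φ B X).2.1 hb) h
        · exact reduce_EMC_root_full (htf _ (by simp))
            (fun hb => soundφ.2 ((L1 φ B X).2.1 hb) h) hfull
        · rw [ihφ B X hwf.1 hfull hne hX hdg, if_pos h]
      · refine ⟨EMC ψ B X, by simp, ?_, ?_, ?_⟩
        · intro hb; exact soundψ.2 ((L1 ψ B X).2.1 hb) h
        · exact reduce_EMC_root_full (htf _ (by simp))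
            (fun hb => soundψ.2 ((L1 ψ B X).2.1 hb) h) hfull
        · rw [ihψ B X hwf.2 hfull hne hX hdg, if_pos h]
  | fall c φ ih =>
    intro B X hwf hfull hne hX hdg
    have hFr : MSO.FreshN c φ := wf_freshN hwf.2 (Finset.mem_insert_self c _)
    have hsound : ∀ a : ℕ, (SatV (B.addNul c (some a)) φ → Sat (B.addNul c (some a)) φ) ∧
        (SatF (B.addNul c (some a)) φ → ¬ Sat (B.addNul c (some a)) φ) :=
      fun a => sound (ar := ar) φ _ hwf.2 (full_addNul_some hfull) hne
    have hdga : ∀ a ∈ B.univ, DGS (B.addNul c (some a)) := fun a ha =>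
      dgs_addNul hdg (fun b hb => (Option.some.inj hb) ▸ ha)
    rw [show EMC (.fall c φ) B X = Game.node (B.restrict (X ∪ B.nulValues), X, .fall c φ)
      (some .falsifier) ((none :: B.univ.toList.map some).map fun u =>
        EMC φ (B.addNul c u) X) from rfl]
    refine main_univ (fun h => h) trivial (fun h => h) ?_ ?_ ?_ ?_ ?_
    · intro g hg
      obtain ⟨u, hu, rfl⟩ := List.mem_map.1 hg
      refine niceG_reduce _ (niceG_EMC φ _ X hX (dgs_addNul hdg ?_))
      rcases List.mem_cons.1 hu with rfl | hu
      · intro a h; cases h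
      · obtain ⟨a, ha, rfl⟩ := List.mem_map.1 hu
        intro b hb
        obtain rfl := Option.some.inj hb
        exact Finset.mem_toList.1 ha
    · rintro ⟨g, hg, hb⟩ hs
      obtain ⟨u, hu, rfl⟩ := List.mem_map.1 hg
      have hs' : ∀ a ∈ B.univ, Sat (B.addNul c (some a)) φ := hs
      rcases List.mem_cons.1 hu with rfl | hu
      · obtain ⟨a0, ha0⟩ := hne
        have hF := satF_mono φ B a0 hFr ((L1 φ _ X).2.1 hb)
        exact (hsound a0).2 hF (hs' a0 ha0)
      · obtain ⟨a, ha, rfl⟩ := List.mem_map.1 hu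
        exact (hsound a).2 ((L1 φ _ X).2.1 hb) (hs' a (Finset.mem_toList.1 ha))
    · intro hall a ha
      refine (hsound a).1 ((L1 φ _ X).1.1 (hall _ ?_))
      exact List.mem_map.2 ⟨some a, by simp [Finset.mem_toList, ha], rfl⟩
    · intro hS g hg hfullg hnt hnb
      obtain ⟨u, hu, rfl⟩ := List.mem_map.1 hg
      have hS' : ∀ a ∈ B.univ, Sat (B.addNul c (some a)) φ := hS
      rcases List.mem_cons.1 hu with rfl | hu
      · exact absurd hfullg (reduce_EMC_root_not_full hnt hnb)
      · obtain ⟨a, ha, rfl⟩ := List.mem_map.1 hu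
        have ha' := Finset.mem_toList.1 ha
        rw [ih _ X hwf.2 (full_addNul_some hfull) hne hX (hdga a ha'),
          if_pos (hS' a ha')]
    · intro hS hbf
      have hS' : ¬ ∀ a ∈ B.univ, Sat (B.addNul c (some a)) φ := hS
      push_neg at hS'
      obtain ⟨a, ha, hns⟩ := hS'
      have hmem : EMC φ (B.addNul c (some a)) X ∈
          (none :: B.univ.toList.map some).map fun u => EMC φ (B.addNul c u) X :=
        List.mem_map.2 ⟨some a, by simp [Finset.mem_toList, ha], rfl⟩
      refine ⟨EMC φ (B.addNul c (some a)) X, hmem, ?_, ?_, ?_⟩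
      · intro ht; exact hns ((hsound a).1 ((L1 φ _ X).1.1 ht))
      · exact reduce_EMC_root_full (fun ht => hns ((hsound a).1 ((L1 φ _ X).1.1 ht)))
          (hbf _ hmem) (full_addNul_some hfull)
      · rw [ih _ X hwf.2 (full_addNul_some hfull) hne hX (hdga a ha), if_neg hns]
  | fex c φ ih =>
    intro B X hwf hfull hne hX hdg
    have hFr : MSO.FreshN c φ := wf_freshN hwf.2 (Finset.mem_insert_self c _)
    have hsound : ∀ a : ℕ, (SatV (B.addNul c (some a)) φ → Sat (B.addNul c (some a)) φ) ∧
        (SatF (B.addNul c (some a)) φ → ¬ Sat (B.addNul c (some a)) φ) :=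
      fun a => sound (ar := ar) φ _ hwf.2 (full_addNul_some hfull) hne
    have hdga : ∀ a ∈ B.univ, DGS (B.addNul c (some a)) := fun a ha =>
      dgs_addNul hdg (fun b hb => (Option.some.inj hb) ▸ ha)
    rw [show EMC (.fex c φ) B X = Game.node (B.restrict (X ∪ B.nulValues), X, .fex c φ)
      (some .verifier) ((none :: B.univ.toList.map some).map fun u =>
        EMC φ (B.addNul c u) X) from rfl]
    refine main_exist (fun h => h) (fun h => h) trivial ?_ ?_ ?_ ?_ ?_
    · intro g hg
      obtain ⟨u, hu, rfl⟩ := List.mem_map.1 hg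
      refine niceG_reduce _ (niceG_EMC φ _ X hX (dgs_addNul hdg ?_))
      rcases List.mem_cons.1 hu with rfl | hu
      · intro a h; cases h
      · obtain ⟨a, ha, rfl⟩ := List.mem_map.1 hu
        intro b hb
        obtain rfl := Option.some.inj hb
        exact Finset.mem_toList.1 ha
    · rintro ⟨g, hg, ht⟩
      obtain ⟨u, hu, rfl⟩ := List.mem_map.1 hg
      show ∃ a ∈ B.univ, Sat (B.addNul c (some a)) φ
      rcases List.mem_cons.1 hu with rfl | hu
      · obtain ⟨a0, ha0⟩ := hne
        have hV := satV_mono φ B a0 hFr ((L1 φ _ X).1.1 ht)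
        exact ⟨a0, ha0, (hsound a0).1 hV⟩
      · obtain ⟨a, ha, rfl⟩ := List.mem_map.1 hu
        exact ⟨a, Finset.mem_toList.1 ha, (hsound a).1 ((L1 φ _ X).1.1 ht)⟩
    · rintro hall ⟨a, ha, hs⟩
      refine (hsound a).2 ((L1 φ _ X).2.1 (hall _ ?_)) hs
      exact List.mem_map.2 ⟨some a, by simp [Finset.mem_toList, ha], rfl⟩
    · intro hS g hg hfullg hnt hnb
      obtain ⟨u, hu, rfl⟩ := List.mem_map.1 hg
      have hS' : ¬ ∃ a ∈ B.univ, Sat (B.addNul c (some a)) φ := hS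
      rcases List.mem_cons.1 hu with rfl | hu
      · exact absurd hfullg (reduce_EMC_root_not_full hnt hnb)
      · obtain ⟨a, ha, rfl⟩ := List.mem_map.1 hu
        have ha' := Finset.mem_toList.1 ha
        rw [ih _ X hwf.2 (full_addNul_some hfull) hne hX (hdga a ha'),
          if_neg (fun hs => hS' ⟨a, ha', hs⟩)]
    · intro hS htf
      have hS' : ∃ a ∈ B.univ, Sat (B.addNul c (some a)) φ := hS
      obtain ⟨a, ha, hs⟩ := hS'
      have hmem : EMC φ (B.addNul c (some a)) X ∈
          (none :: B.univ.toList.map some).map fun u => EMC φ (B.addNul c u) X :=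
        List.mem_map.2 ⟨some a, by simp [Finset.mem_toList, ha], rfl⟩
      refine ⟨EMC φ (B.addNul c (some a)) X, hmem, ?_, ?_, ?_⟩
      · intro hb; exact (hsound a).2 ((L1 φ _ X).2.1 hb) hs
      · exact reduce_EMC_root_full (htf _ hmem)
          (fun hb => (hsound a).2 ((L1 φ _ X).2.1 hb) hs) (full_addNul_some hfull)
      · rw [ih _ X hwf.2 (full_addNul_some hfull) hne hX (hdga a ha), if_pos hs]
  | sall R φ ih =>
    intro B X hwf hfull hne hX hdg
    have hsound : ∀ U : Finset ℕ, (SatV (B.addRel R U) φ → Sat (B.addRel R U) φ) ∧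
        (SatF (B.addRel R U) φ → ¬ Sat (B.addRel R U) φ) :=
      fun U => sound (ar := ar) φ _ hwf.2.2 (full_addRel hfull) hne
    rw [show EMC (.sall R φ) B X = Game.node (B.restrict (X ∪ B.nulValues), X, .sall R φ)
      (some .falsifier) (B.univ.powerset.toList.map fun U =>
        EMC φ (B.addRel R U) X) from rfl]
    refine main_univ (fun h => h) trivial (fun h => h) ?_ ?_ ?_ ?_ ?_
    · intro g hg
      obtain ⟨U, hU, rfl⟩ := List.mem_map.1 hg
      exact niceG_reduce _ (niceG_EMC φ _ X hX (dgs_addRel hdg))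
    · rintro ⟨g, hg, hb⟩ hs
      obtain ⟨U, hU, rfl⟩ := List.mem_map.1 hg
      have hs' : ∀ U ⊆ B.univ, Sat (B.addRel R U) φ := hs
      exact (hsound U).2 ((L1 φ _ X).2.1 hb)
        (hs' U (Finset.mem_powerset.1 (Finset.mem_toList.1 hU)))
    · intro hall U hU
      refine (hsound U).1 ((L1 φ _ X).1.1 (hall _ ?_))
      exact List.mem_map.2 ⟨U, Finset.mem_toList.2 (Finset.mem_powerset.2 hU), rfl⟩
    · intro hS g hg _ _ _
      obtain ⟨U, hU, rfl⟩ := List.mem_map.1 hg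
      have hS' : ∀ U ⊆ B.univ, Sat (B.addRel R U) φ := hS
      rw [ih _ X hwf.2.2 (full_addRel hfull) hne hX (dgs_addRel hdg),
        if_pos (hS' U (Finset.mem_powerset.1 (Finset.mem_toList.1 hU)))]
    · intro hS hbf
      have hS' : ¬ ∀ U ⊆ B.univ, Sat (B.addRel R U) φ := hS
      push_neg at hS'
      obtain ⟨U, hU, hns⟩ := hS'
      have hmem : EMC φ (B.addRel R U) X ∈
          B.univ.powerset.toList.map fun U => EMC φ (B.addRel R U) X :=
        List.mem_map.2 ⟨U, Finset.mem_toList.2 (Finset.mem_powerset.2 hU), rfl⟩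
      refine ⟨EMC φ (B.addRel R U) X, hmem, ?_, ?_, ?_⟩
      · intro ht; exact hns ((hsound U).1 ((L1 φ _ X).1.1 ht))
      · exact reduce_EMC_root_full (fun ht => hns ((hsound U).1 ((L1 φ _ X).1.1 ht)))
          (hbf _ hmem) (full_addRel hfull)
      · rw [ih _ X hwf.2.2 (full_addRel hfull) hne hX (dgs_addRel hdg), if_neg hns]
  | sex R φ ih =>
    intro B X hwf hfull hne hX hdg
    have hsound : ∀ U : Finset ℕ, (SatV (B.addRel R U) φ → Sat (B.addRel R U) φ) ∧
        (SatF (B.addRel R U) φ → ¬ Sat (B.addRel R U) φ) :=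
      fun U => sound (ar := ar) φ _ hwf.2.2 (full_addRel hfull) hne
    rw [show EMC (.sex R φ) B X = Game.node (B.restrict (X ∪ B.nulValues), X, .sex R φ)
      (some .verifier) (B.univ.powerset.toList.map fun U =>
        EMC φ (B.addRel R U) X) from rfl]
    refine main_exist (fun h => h) (fun h => h) trivial ?_ ?_ ?_ ?_ ?_
    · intro g hg
      obtain ⟨U, hU, rfl⟩ := List.mem_map.1 hg
      exact niceG_reduce _ (niceG_EMC φ _ X hX (dgs_addRel hdg))
    · rintro ⟨g, hg, ht⟩
      obtain ⟨U, hU, rfl⟩ := List.mem_map.1 hg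
      exact ⟨U, Finset.mem_powerset.1 (Finset.mem_toList.1 hU),
        (hsound U).1 ((L1 φ _ X).1.1 ht)⟩
    · rintro hall ⟨U, hU, hs⟩
      refine (hsound U).2 ((L1 φ _ X).2.1 (hall _ ?_)) hs
      exact List.mem_map.2 ⟨U, Finset.mem_toList.2 (Finset.mem_powerset.2 hU), rfl⟩
    · intro hS g hg _ _ _
      obtain ⟨U, hU, rfl⟩ := List.mem_map.1 hg
      have hS' : ¬ ∃ U ⊆ B.univ, Sat (B.addRel R U) φ := hS
      rw [ih _ X hwf.2.2 (full_addRel hfull) hne hX (dgs_addRel hdg),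
        if_neg (fun hs => hS'
          ⟨U, Finset.mem_powerset.1 (Finset.mem_toList.1 hU), hs⟩)]
    · intro hS htf
      have hS' : ∃ U ⊆ B.univ, Sat (B.addRel R U) φ := hS
      obtain ⟨U, hU, hs⟩ := hS'
      have hmem : EMC φ (B.addRel R U) X ∈
          B.univ.powerset.toList.map fun U => EMC φ (B.addRel R U) X :=
        List.mem_map.2 ⟨U, Finset.mem_toList.2 (Finset.mem_powerset.2 hU), rfl⟩
      refine ⟨EMC φ (B.addRel R U) X, hmem, ?_, ?_, ?_⟩
      · intro hb; exact (hsound U).2 ((L1 φ _ X).2.1 hb) hs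
      · exact reduce_EMC_root_full (htf _ hmem)
          (fun hb => (hsound U).2 ((L1 φ _ X).2.1 hb) hs) (full_addRel hfull)
      · rw [ih _ X hwf.2.2 (full_addRel hfull) hne hX (dgs_addRel hdg), if_pos hs]

end Dev14
section Dev15

theorem rtree_exists_leaf : ∀ (t : RTree), ∃ p b, t.subtreeAt p = some (RTree.node b [])
  | .node b [] => ⟨[], b, rfl⟩
  | .node b (c :: cs) => by
    obtain ⟨p, b', h⟩ := rtree_exists_leaf c
    refine ⟨0 :: p, b', ?_⟩
    rw [RTree.subtreeAt]
    simp [h]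

lemma univ_nonempty_of_td {A : Struc} {t : RTree} (htd : IsTreeDecomp A t)
    (hnice : t.Nice) : A.univ.Nonempty := by
  obtain ⟨p, b, hleaf⟩ := rtree_exists_leaf t
  have hstep : (RTree.node b []).NiceStep := hnice p _ hleaf
  obtain ⟨x, rfl⟩ := hstep
  have hb : t.bagAt p = some {x} := by rw [RTree.bagAt, hleaf]; rfl
  exact ⟨x, htd.bags_sub p _ hb (Finset.mem_singleton_self x)⟩

lemma cost_empty {α : ℕ → ℤ} {Rbar : Finset ℕ} {W : ℕ → Finset ℕ} :
    cost α Rbar ∅ W = ∑ R ∈ Rbar, α R * ((W R).card : ℤ) := by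
  simp [cost]

end Dev15

/-- Root correctness: if Invariant 12 holds at the root `r`
(with `X_r = ∅` and `𝔄_r = 𝔄`), then the optimum
`OPT = min{Σ αₖ|Uₖ| : (𝔄, U₁, …, U_l) ⊨ φ}` equals
`min{val_r(ℛ) : ℛ ∈ S_r(∅̄), eval(convert(ℛ)) = ⊤}`. -/
theorem statement_19 (ar : ℕ → ℕ) (τ τ' : Vocab) (Rbar : Finset ℕ) (φ : MSO)
    (α : ℕ → ℤ) (A : Struc) (t : RTree)
    (harity : ∀ R ∈ τ.rels, 1 ≤ ar R)
    (hRsub : Rbar ⊆ τ.rels) (hRun : ∀ R ∈ Rbar, ar R = 1)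
    (hτnul : τ.nulls = ∅) (hτ' : τ' = ⟨τ.rels \ Rbar, ∅⟩)
    (hφ : MSO.wf ar τ φ) (hA : A.WF ar) (hAv : A.voc = τ')
    (htd : IsTreeDecomp A t) (hnice : t.Nice) (hroot : t.bag = ∅)
    (Sr : (ℕ → Finset ℕ) → Set (Game EPos)) (valr : Game EPos → WithTop ℤ)
    (hInv : Invariant φ α Rbar A ∅ Sr valr)
    (OPT : WithTop ℤ)
    (hOPT : IsMinZ OPT
      {v : ℤ | ∃ U : ℕ → Finset ℕ, (∀ R ∈ Rbar, U R ⊆ A.univ) ∧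
        (∀ R ∉ Rbar, U R = ∅) ∧ Sat (A.addRels Rbar U) φ ∧
        v = ∑ R ∈ Rbar, α R * ((U R).card : ℤ)}) :
    IsMinW OPT
      {v | ∃ G ∈ Sr (fun _ => (∅ : Finset ℕ)),
        Game.eval (convert G) = Game.top ∧ v = valr G} := by
  classical
  set U₀ : ℕ → Finset ℕ := fun _ => (∅ : Finset ℕ) with hU₀
  -- basic facts
  have hne : A.univ.Nonempty := univ_nonempty_of_td htd hnice
  have hnulA : A.voc.nulls = ∅ := by rw [hAv, hτ']
  have hvoc : ∀ W : ℕ → Finset ℕ, (A.addRels Rbar W).voc = τ := by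
    intro W
    show (⟨A.voc.rels ∪ Rbar, A.voc.nulls⟩ : Vocab) = τ
    rw [hAv, hτ']
    show (⟨(τ.rels \ Rbar) ∪ Rbar, ∅⟩ : Vocab) = τ
    rw [Finset.sdiff_union_of_subset hRsub, ← hτnul]
  have hwfB : ∀ W : ℕ → Finset ℕ, MSO.wf ar (A.addRels Rbar W).voc φ := by
    intro W; rw [hvoc]; exact hφ
  have hfullB : ∀ W : ℕ → Finset ℕ, (A.addRels Rbar W).FullyInterpreted := by
    intro W c hc
    have : c ∈ A.voc.nulls := hc
    rw [hnulA] at this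
    exact absurd this (Finset.notMem_empty c)
  have hdgB : ∀ W : ℕ → Finset ℕ, DGS (A.addRels Rbar W) := by
    intro W c hc
    have : c ∈ A.voc.nulls := hc
    rw [hnulA] at this
    exact absurd this (Finset.notMem_empty c)
  have hneB : ∀ W : ℕ → Finset ℕ, (A.addRels Rbar W).univ.Nonempty := fun W => hne
  -- the key equivalence from the model-checking development
  have hMain : ∀ W : ℕ → Finset ℕ,
      Game.eval (convert (RED φ Rbar A ∅ W)) =
        (if Sat (A.addRels Rbar W) φ then Game.top else Game.bot) := by
    intro W
    exact main_thm (ar := ar) φ (A.addRels Rbar W) ∅ (hwfB W) (hfullB W) (hneB W)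
      (Finset.empty_subset _) (hdgB W)
  have hKey : ∀ W : ℕ → Finset ℕ,
      Game.eval (convert (RED φ Rbar A ∅ W)) = Game.top ↔ Sat (A.addRels Rbar W) φ := by
    intro W
    rw [hMain W]
    by_cases hs : Sat (A.addRels Rbar W) φ
    · simp [hs]
    · simp [hs]
  have hRedNeBot : ∀ W : ℕ → Finset ℕ, Sat (A.addRels Rbar W) φ →
      RED φ Rbar A ∅ W ≠ Game.bot := by
    intro W hs hbot
    have := (hKey W).2 hs
    rw [hbot, convert_bot, eval_bot] at this
    exact absurd this (by simp)
  have hNiceRED : ∀ W : ℕ → Finset ℕ, NiceG (RED φ Rbar A ∅ W) := fun W =>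
    niceG_reduce _ (niceG_EMC φ _ ∅ (Finset.empty_subset _) (hdgB W))
  -- invariant components at U₀
  have hU₀valid : ValidAssign Rbar ∅ U₀ := ⟨fun R _ => Finset.Subset.refl _, fun R _ => rfl⟩
  obtain ⟨hI1, hI2, hI3⟩ := hInv U₀ hU₀valid
  have hMatch : ∀ W : ℕ → Finset ℕ, Matches Rbar ∅ W U₀ := by
    intro W R hR
    exact Finset.inter_empty _
  -- part (1): lower bound
  have hLB : ∀ v ∈ {v | ∃ G ∈ Sr U₀, Game.eval (convert G) = Game.top ∧ v = valr G},
      OPT ≤ v := by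
    rintro v ⟨G, hG, hevalG, rfl⟩
    have hmin := hI3 G hG
    by_cases hCG : {v : ℤ | ∃ W, ValidAssign Rbar A.univ W ∧ Matches Rbar ∅ W U₀ ∧
        GEquivE (RED φ Rbar A ∅ W) G ∧ RED φ Rbar A ∅ W ≠ Game.bot ∧
        v = cost α Rbar ∅ W}.Nonempty
    · obtain ⟨v0, hv0, hveq⟩ := hmin.2.2 hCG
      obtain ⟨W, hWvalid, -, hWequiv, -, rfl⟩ := hv0
      have hWtop : Game.eval (convert (RED φ Rbar A ∅ W)) = Game.top :=
        (evalconvert_transfer _ _ hWequiv).1.2 hevalG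
      have hWsat : Sat (A.addRels Rbar W) φ := (hKey W).1 hWtop
      have hin : cost α Rbar ∅ W ∈ {v : ℤ | ∃ U : ℕ → Finset ℕ,
          (∀ R ∈ Rbar, U R ⊆ A.univ) ∧ (∀ R ∉ Rbar, U R = ∅) ∧
          Sat (A.addRels Rbar U) φ ∧
          v = ∑ R ∈ Rbar, α R * ((U R).card : ℤ)} :=
        ⟨W, hWvalid.1, hWvalid.2, hWsat, cost_empty⟩
      rw [hveq]
      exact hOPT.1 _ hin
    · rw [Set.not_nonempty_iff_eq_empty] at hCG
      rw [hmin.2.1 hCG]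
      exact le_top
  -- any satisfying assignment yields a table entry
  have hEntry : ∀ U : ℕ → Finset ℕ, (∀ R ∈ Rbar, U R ⊆ A.univ) → (∀ R ∉ Rbar, U R = ∅) →
      Sat (A.addRels Rbar U) φ → ∃ G, (G ∈ Sr U₀ ∧ GEquivE G (RED φ Rbar A ∅ U)) ∧
        Game.eval (convert G) = Game.top := by
    intro U hU1 hU2 hUsat
    obtain ⟨G, ⟨hGmem, hGe⟩, -⟩ := hI1 U ⟨hU1, hU2⟩ (hMatch U) (hRedNeBot U hUsat)
    refine ⟨G, ⟨hGmem, hGe⟩, ?_⟩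
    exact (evalconvert_transfer _ _ hGe).1.2 ((hKey U).2 hUsat)
  refine ⟨hLB, ?_, ?_⟩
  -- part (2): empty case
  · intro hV2
    apply hOPT.2.1
    rw [Set.eq_empty_iff_forall_notMem]
    rintro v ⟨U, hU1, hU2, hUsat, hveq⟩
    obtain ⟨G, ⟨hGmem, -⟩, hGtop⟩ := hEntry U hU1 hU2 hUsat
    have : valr G ∈ {v | ∃ G ∈ Sr U₀, Game.eval (convert G) = Game.top ∧ v = valr G} :=
      ⟨G, hGmem, hGtop, rfl⟩
    rw [hV2] at this
    exact this
  -- part (3): attainment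
  · rintro ⟨v, ⟨G, hG, hevalG, rfl⟩⟩
    -- V1 is nonempty
    obtain ⟨-, W', hW'valid, -, hW'equiv⟩ := hI2 G hG
    have hW'top : Game.eval (convert (RED φ Rbar A ∅ W')) = Game.top :=
      (evalconvert_transfer _ _ hW'equiv).1.2 hevalG
    have hW'sat : Sat (A.addRels Rbar W') φ := (hKey W').1 hW'top
    have hV1ne : {v : ℤ | ∃ U : ℕ → Finset ℕ, (∀ R ∈ Rbar, U R ⊆ A.univ) ∧
        (∀ R ∉ Rbar, U R = ∅) ∧ Sat (A.addRels Rbar U) φ ∧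
        v = ∑ R ∈ Rbar, α R * ((U R).card : ℤ)}.Nonempty :=
      ⟨_, W', hW'valid.1, hW'valid.2, hW'sat, rfl⟩
    obtain ⟨v0, hv0, hOPTeq⟩ := hOPT.2.2 hV1ne
    obtain ⟨U, hU1, hU2, hUsat, rfl⟩ := hv0
    obtain ⟨G0, ⟨hG0mem, hG0equiv⟩, hG0top⟩ := hEntry U hU1 hU2 hUsat
    -- G0 is a nice game
    obtain ⟨-, W'', -, -, hW''equiv⟩ := hI2 G0 hG0mem
    have hNiceG0 : NiceG G0 := niceG_transfer _ _ hW''equiv (hNiceRED W'')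
    have hSym : GEquivE (RED φ Rbar A ∅ U) G0 := gequivE_symm _ _ hNiceG0 hG0equiv
    -- valr G0 ≤ cost U
    have hle1 : valr G0 ≤ ((cost α Rbar ∅ U : ℤ) : WithTop ℤ) :=
      (hI3 G0 hG0mem).1 _ ⟨U, ⟨hU1, hU2⟩, hMatch U, hSym, hRedNeBot U hUsat, rfl⟩
    have hle2 : OPT ≤ valr G0 := hLB _ ⟨G0, hG0mem, hG0top, rfl⟩
    have hcost : (cost α Rbar ∅ U : ℤ) = ∑ R ∈ Rbar, α R * ((U R).card : ℤ) := cost_empty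
    have hEq : valr G0 = OPT := by
      apply le_antisymm
      · rw [hOPTeq, ← hcost]
        exact hle1
      · exact hle2
    exact ⟨G0, hG0mem, hG0top, hEq.symm⟩

end MSOG
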